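/- arXiv:2101.10088 — 11 statements merged into one kernel-verified Lean document; each statement's English description precedes it below -/
import Mathlib

section
/- For every natural number n ≥ 1, the cofinality of the partial order of countable subsets of ℵ_n under inclusion is ℵ_n; that is, there is a family of ℵ_n countable subsets of ℵ_n such that every countable subset of ℵ_n is contained in some member of the family, and no family of smaller cardinality has this property. -/
open Cardinal Set

section Aux

open Ordinal

universe u

lemma exists_cofinal_family : ∀ (n : ℕ) (A : Type u), #A ≤ Cardinal.aleph n →
    ∃ D : Set (Set A), (∀ s ∈ D, s.Countable) ∧
      (∀ t : Set A, t.Countable → ∃ s ∈ D, t ⊆ s) ∧ #D ≤ Cardinal.aleph n := by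
  intro n
  induction n with
  | zero =>
    intro A hA
    rw [Nat.cast_zero, aleph_zero, mk_le_aleph0_iff] at hA
    refine ⟨{Set.univ}, ?_, ?_, ?_⟩
    · rintro s rfl
      exact Set.countable_univ
    · exact fun t _ => ⟨Set.univ, rfl, subset_univ t⟩
    · simp only [mk_singleton]
      exact one_le_aleph0.trans (aleph0_le_aleph _)
  | succ n ih =>
    intro A hA
    set κ := Cardinal.aleph (n + 1 : ℕ) with hκ
    have hksucc : κ = Order.succ (Cardinal.aleph n) := by
      rw [hκ, Nat.cast_succ, Ordinal.add_one_eq_succ, aleph_succ]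
    have hmkO : #κ.ord.ToType = κ := by rw [mk_toType, card_ord]
    obtain ⟨f⟩ : Nonempty (A ↪ κ.ord.ToType) := by
      rw [← Cardinal.le_def, hmkO]; exact hA
    have hseg : ∀ β : κ.ord.ToType, #(f ⁻¹' Set.Iio β) ≤ Cardinal.aleph n := by
      intro β
      have h1 : #(f ⁻¹' Set.Iio β) ≤ #(Set.Iio β) :=
        mk_preimage_of_injective f _ f.injective
      have h2 : #(Set.Iio β) < Order.succ (Cardinal.aleph n) := by
        rw [← hksucc]; exact mk_Iio_toType_ord_lt β
      exact h1.trans (Order.lt_succ_iff.mp h2)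
    choose D hD1 hD2 hD3 using fun β : κ.ord.ToType =>
      ih (↥(f ⁻¹' Set.Iio β)) (hseg β)
    refine ⟨⋃ β : κ.ord.ToType, (fun s => Subtype.val '' s) '' D β, ?_, ?_, ?_⟩
    · rintro s hs
      simp only [Set.mem_iUnion, Set.mem_image] at hs
      obtain ⟨β, s', hs', rfl⟩ := hs
      exact (hD1 β s' hs').image _
    · intro t ht
      have hb : Set.Bounded (· < ·) (f '' t) := by
        suffices key : #(f '' t) < Order.cof κ.ord.ToType from
          not_isCofinal_iff.1 (fun h => (Order.cof_le h).not_gt key)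
        rw [Ordinal.cof_toType]
        have hcof : κ.ord.cof = κ := by
          rw [hksucc]
          exact (isRegular_succ (aleph0_le_aleph _)).cof_eq
        rw [hcof]
        calc #(f '' t) ≤ ℵ₀ := (ht.image f).le_aleph0
          _ < κ := by rw [hksucc]; exact (aleph0_le_aleph _).trans_lt (Order.lt_succ _)
      obtain ⟨β, hβ⟩ := hb
      have htsub : t ⊆ f ⁻¹' Set.Iio β := fun a ha => hβ _ (Set.mem_image_of_mem f ha)
      have ht' : (Subtype.val ⁻¹' t : Set ↥(f ⁻¹' Set.Iio β)).Countable :=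
        ht.preimage Subtype.val_injective
      obtain ⟨s', hs', hsub⟩ := hD2 β _ ht'
      refine ⟨Subtype.val '' s', ?_, ?_⟩
      · exact Set.mem_iUnion.2 ⟨β, Set.mem_image_of_mem _ hs'⟩
      · intro a ha
        exact ⟨⟨a, htsub ha⟩, hsub ha, rfl⟩
    · calc #(⋃ β : κ.ord.ToType, (fun s => Subtype.val '' s) '' D β)
          ≤ #κ.ord.ToType * ⨆ β, #((fun s => Subtype.val '' s) '' D β) := mk_iUnion_le _
        _ ≤ κ * Cardinal.aleph n := by
            apply mul_le_mul' hmkO.le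
            apply ciSup_le'
            intro β
            exact (mk_image_le).trans (hD3 β)
        _ ≤ κ := by
            apply (mul_le_max _ _).trans
            simp only [max_le_iff]
            refine ⟨⟨le_rfl, ?_⟩, ?_⟩
            · rw [hksucc]; exact Order.le_succ _
            · rw [hksucc]; exact (aleph0_le_aleph _).trans (Order.le_succ _)

lemma cof_lower_bound {A : Type u} (h0 : ℵ₀ ≤ #A) (D : Set (Set A))
    (hc : ∀ s ∈ D, s.Countable)
    (hcof : ∀ t : Set A, t.Countable → t.Infinite → ∃ s ∈ D, t ⊆ s) :
    #A ≤ max #D ℵ₀ := by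
  obtain ⟨t₀, ht₀⟩ := Cardinal.le_mk_iff_exists_set.mp h0
  have ht₀c : t₀.Countable := by
    rw [← le_aleph0_iff_set_countable, ht₀]
  have ht₀i : t₀.Infinite := by
    rw [← Set.infinite_coe_iff]
    exact Cardinal.infinite_iff.mpr ht₀.ge
  have hcover : (Set.univ : Set A) ⊆ ⋃₀ D := by
    intro a _
    obtain ⟨s, hs, hsub⟩ := hcof (insert a t₀) (ht₀c.insert a)
      (ht₀i.mono (Set.subset_insert a t₀))
    exact ⟨s, hs, hsub (Set.mem_insert a t₀)⟩
  calc #A = #(Set.univ : Set A) := mk_univ.symm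
    _ ≤ #(⋃₀ D) := mk_le_mk_of_subset hcover
    _ ≤ #D * ⨆ s : D, #s := mk_sUnion_le D
    _ ≤ #D * ℵ₀ := by
        apply mul_le_mul' le_rfl
        exact ciSup_le' fun s => (hc s s.2).le_aleph0
    _ ≤ max (max #D ℵ₀) ℵ₀ := mul_le_max _ _
    _ = max #D ℵ₀ := by rw [max_assoc, max_self]

end Aux

/-- The least cardinality of a family of countably infinite subsets of `A` that is
cofinal in `([A]^{ℵ₀}, ⊆)`. -/
noncomputable def cofCountableSubsets (A : Type*) : Cardinal :=
  sInf { c | ∃ D : Set (Set A), (∀ s ∈ D, s.Countable ∧ s.Infinite) ∧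
    (∀ t : Set A, t.Countable → t.Infinite → ∃ s ∈ D, t ⊆ s) ∧ #D = c }

/-- For every `n ≥ 1`, `cf([ℵ_n]^{ℵ₀}, ⊆) = ℵ_n`. -/
theorem cof_countable_subsets_aleph_n (n : ℕ) (hn : 1 ≤ n)
    (A : Type) (hA : #A = Cardinal.aleph n) :
    cofCountableSubsets A = Cardinal.aleph n := by
  have h0 : ℵ₀ ≤ #A := by rw [hA]; exact aleph0_le_aleph _
  have hlt : ℵ₀ < Cardinal.aleph n := by
    rw [← aleph_zero]
    apply aleph_lt_aleph.mpr
    exact_mod_cast hn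
  obtain ⟨t₀, ht₀⟩ := Cardinal.le_mk_iff_exists_set.mp h0
  have ht₀c : t₀.Countable := by
    rw [← le_aleph0_iff_set_countable, ht₀]
  have ht₀i : t₀.Infinite := by
    rw [← Set.infinite_coe_iff]
    exact Cardinal.infinite_iff.mpr ht₀.ge
  obtain ⟨D0, hD0c, hD0cof, hD0le⟩ := exists_cofinal_family n A hA.le
  set Dw : Set (Set A) :=
    ((fun s => s ∪ t₀) '' D0) ∪ ((fun a => insert a t₀) '' Set.univ) with hDw
  have hw1 : ∀ s ∈ Dw, s.Countable ∧ s.Infinite := by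
    rintro s (⟨s', hs', rfl⟩ | ⟨a, _, rfl⟩)
    · exact ⟨(hD0c s' hs').union ht₀c, (ht₀i.mono Set.subset_union_right)⟩
    · exact ⟨ht₀c.insert a, ht₀i.mono (Set.subset_insert a t₀)⟩
  have hw2 : ∀ t : Set A, t.Countable → t.Infinite → ∃ s ∈ Dw, t ⊆ s := by
    intro t htc _
    obtain ⟨s, hs, hsub⟩ := hD0cof t htc
    exact ⟨s ∪ t₀, Or.inl ⟨s, hs, rfl⟩, hsub.trans Set.subset_union_left⟩
  have hwcard : #Dw = Cardinal.aleph n := by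
    apply le_antisymm
    · calc #Dw ≤ #((fun s => s ∪ t₀) '' D0) + #((fun a => insert a t₀) '' (Set.univ : Set A)) :=
            mk_union_le _ _
        _ ≤ #D0 + #A := by
            apply add_le_add mk_image_le
            exact mk_image_le.trans mk_univ.le
        _ ≤ Cardinal.aleph n + Cardinal.aleph n := add_le_add hD0le hA.le
        _ = Cardinal.aleph n := add_eq_self (aleph0_le_aleph _)
    · have := cof_lower_bound h0 Dw (fun s hs => (hw1 s hs).1) hw2
      rw [hA] at this
      rcases le_max_iff.mp this with h | h
      · exact h
      · exact absurd h hlt.not_ge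
  have hmem : Cardinal.aleph n ∈ { c | ∃ D : Set (Set A), (∀ s ∈ D, s.Countable ∧ s.Infinite) ∧
      (∀ t : Set A, t.Countable → t.Infinite → ∃ s ∈ D, t ⊆ s) ∧ #D = c } :=
    ⟨Dw, hw1, hw2, hwcard⟩
  apply le_antisymm (csInf_le' hmem)
  apply le_csInf ⟨_, hmem⟩
  rintro c ⟨D, hc, hcof, rfl⟩
  have := cof_lower_bound h0 D (fun s hs => (hc s hs).1) hcof
  rw [hA] at this
  rcases le_max_iff.mp this with h | h
  · exact h
  · exact absurd h hlt.not_ge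
end

section
/- If κ is an uncountable cardinal with cofinality ω, then cf([κ]^{ℵ₀}, ⊆) > κ. -/
open Cardinal Set

/-- If `κ` is an uncountable cardinal of cofinality `ω`, then `cf([κ]^{ℵ₀}, ⊆) > κ`. -/
theorem cof_countable_subsets_gt_of_cof_omega (κ : Cardinal) (h1 : ℵ₀ < κ)
    (h2 : κ.ord.cof = ℵ₀) (A : Type) (hA : #A = κ) :
    κ < cofCountableSubsets A := by
  by_contra hle
  push_neg at hle
  -- the defining set is nonempty
  have hne : { c | ∃ D : Set (Set A), (∀ s ∈ D, s.Countable ∧ s.Infinite) ∧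
      (∀ t : Set A, t.Countable → t.Infinite → ∃ s ∈ D, t ⊆ s) ∧ #D = c }.Nonempty := by
    refine ⟨_, ⟨{s : Set A | s.Countable ∧ s.Infinite}, fun s hs => hs,
      fun t ht hti => ⟨t, ⟨ht, hti⟩, subset_rfl⟩, rfl⟩⟩
  have hmem := csInf_mem hne
  obtain ⟨D, hD1, hD2, hD3⟩ := hmem
  rw [cofCountableSubsets] at hle
  rw [← hD3] at hle
  -- A is infinite with #A = κ
  have hAinf : ℵ₀ ≤ #A := by rw [hA]; exact h1.le
  -- the canonical type of order type κ.ord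
  have hTnonempty : Nonempty κ.ord.ToType := by
    rw [Ordinal.toType_nonempty_iff_ne_zero]
    intro h0
    simp [Cardinal.ord_eq_zero] at h0
    rw [h0] at h1
    exact absurd h1 (by simp)
  have hTcard : #κ.ord.ToType = κ := Cardinal.mk_ord_toType κ
  -- inject D into T
  have hDT : #D ≤ #κ.ord.ToType := by rw [hTcard]; exact hle
  obtain ⟨g0⟩ := (Cardinal.le_def _ _).mp hDT
  classical
  let g : Set A → κ.ord.ToType := fun s => if h : s ∈ D then g0 ⟨s, h⟩ else Classical.choice hTnonempty
  have hginj : Set.InjOn g D := by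
    intro s hs t ht hst
    simp only [g, dif_pos hs, dif_pos ht] at hst
    exact congrArg Subtype.val (g0.injective hst)
  -- an unbounded countable subset of T
  haveI : IsWellOrder κ.ord.ToType (· < ·) := isWellOrder_lt
  obtain ⟨S, hSub, hScard⟩ := Order.exists_cof_eq κ.ord.ToType
  rw [Ordinal.cof_toType, h2] at hScard
  obtain ⟨e⟩ := Cardinal.eq.mp (hScard.trans Cardinal.mk_nat.symm)
  set x : ℕ → κ.ord.ToType := fun n => (e.symm n : κ.ord.ToType) with hx
  -- the pieces Dₙ and their unions Uₙ
  set Dn : ℕ → Set (Set A) := fun n => {s ∈ D | g s ≤ x n} with hDn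
  set U : ℕ → Set A := fun n => ⋃₀ Dn n with hU
  have hDncard : ∀ n, #(Dn n) < κ := by
    intro n
    have hinj : Function.Injective (fun s : Dn n => (⟨g s.1, s.2.2⟩ : Set.Iic (x n))) := by
      intro s t hst
      have := congrArg Subtype.val hst
      exact Subtype.ext (hginj s.2.1 t.2.1 this)
    have h1' : #(Dn n) ≤ #(Set.Iic (x n)) := Cardinal.mk_le_of_injective hinj
    have h2' : #(Set.Iic (x n)) ≤ #(Set.Iio (x n)) + 1 := by
      rw [← Set.Iio_insert]
      exact Cardinal.mk_insert_le
    have h3' : #(Set.Iio (x n)) < κ := Cardinal.mk_Iio_ord_toType (x n)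
    exact lt_of_le_of_lt (h1'.trans h2')
      (Cardinal.add_lt_of_lt h1.le h3' (lt_trans (by simp) h1))
  have hUcard : ∀ n, #(U n) < κ := by
    intro n
    refine lt_of_le_of_lt (Cardinal.mk_sUnion_le _) ?_
    refine Cardinal.mul_lt_of_lt h1.le (hDncard n) (lt_of_le_of_lt ?_ h1)
    refine ciSup_le' fun s => ?_
    exact (Set.Countable.le_aleph0 ((hD1 s.1 s.2.1).1))
  -- pick points outside each Uₙ
  have hpick : ∀ n, ∃ a : A, a ∉ U n := by
    intro n
    by_contra hcon
    push_neg at hcon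
    have hu : U n = Set.univ := Set.eq_univ_of_forall hcon
    have hk := hUcard n
    rw [hu, Cardinal.mk_univ, hA] at hk
    exact lt_irrefl _ hk
  choose a ha using hpick
  -- an infinite countable base set
  have : Infinite A := Cardinal.infinite_iff.mpr hAinf
  let i : ℕ ↪ A := Infinite.natEmbedding A
  set t : Set A := Set.range i ∪ Set.range a with ht
  have htc : t.Countable := (Set.countable_range i).union (Set.countable_range a)
  have hti : t.Infinite :=
    (Set.infinite_range_of_injective i.injective).mono Set.subset_union_left
  obtain ⟨s, hsD, hts⟩ := hD2 t htc hti
  -- s belongs to some Dₙ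
  obtain ⟨b, hbS, hbub⟩ := hSub (g s)
  have hgs : g s ≤ x (e ⟨b, hbS⟩) := by
    have : x (e ⟨b, hbS⟩) = b := by simp [hx]
    rw [this]
    exact hbub
  set n := e ⟨b, hbS⟩
  have hsDn : s ∈ Dn n := ⟨hsD, hgs⟩
  have hsub : s ⊆ U n := Set.subset_sUnion_of_mem hsDn
  exact ha n (hsub (hts (Set.mem_union_right _ ⟨n, rfl⟩)))
end

section
/- If a family F of Polish subspaces covers a completely metrizable space X whose cellularity is an uncountable cardinal κ, then |F| ≥ κ. In particular, if X is a completely metrizable space of weight κ > ℵ₀, then any covering of X by separable subspaces has cardinality at least κ. -/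
open Cardinal Set TopologicalSpace

/-- The cellularity of a topological space: the supremum of the cardinalities of
families of pairwise disjoint nonempty open subsets. -/
noncomputable def cellularity (X : Type*) [TopologicalSpace X] : Cardinal :=
  sSup { c | ∃ S : Set (Set X), (∀ U ∈ S, IsOpen U ∧ U.Nonempty) ∧
    S.PairwiseDisjoint id ∧ #S = c }

/-- The weight of a topological space: the least cardinality of a basis. -/
noncomputable def tweight (X : Type*) [TopologicalSpace X] : Cardinal :=
  sInf { c | ∃ B : Set (Set X), IsTopologicalBasis B ∧ #B = c }

/-- Cellularity is at most the cardinality of any dense set. -/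
lemma cellularity_le_dense {X : Type} [TopologicalSpace X] {D : Set X} (hD : Dense D) :
    cellularity X ≤ #D := by
  refine csSup_le' ?_
  rintro c ⟨S, hS, hdisj, rfl⟩
  have hpick : ∀ U : S, ∃ d : D, (d : X) ∈ (U : Set X) := by
    rintro ⟨U, hU⟩
    obtain ⟨x, hx, hxD⟩ := hD.inter_open_nonempty U (hS U hU).1 (hS U hU).2
    exact ⟨⟨x, hxD⟩, hx⟩
  choose f hf using hpick
  have hinj : Function.Injective f := by
    rintro ⟨U, hU⟩ ⟨V, hV⟩ h
    ext1
    by_contra hne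
    have := hdisj hU hV hne
    have hm : (f ⟨U, hU⟩ : X) ∈ V := by rw [h]; exact hf ⟨V, hV⟩
    exact (Set.disjoint_left.1 this (hf ⟨U, hU⟩)) hm
  exact Cardinal.mk_le_of_injective hinj

/-- In a metric space, the weight is at most `max #D ℵ₀` for any dense `D`. -/
lemma tweight_le_dense {X : Type} [MetricSpace X] {D : Set X} (hD : Dense D) :
    tweight X ≤ max #D ℵ₀ := by
  set B : Set (Set X) := Set.range (fun p : D × ℕ => Metric.ball (p.1 : X) (1 / (p.2 + 1)))
  have hbasis : IsTopologicalBasis B := by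
    refine isTopologicalBasis_of_isOpen_of_nhds ?_ ?_
    · rintro u ⟨p, rfl⟩; exact Metric.isOpen_ball
    · intro a u ha hu
      obtain ⟨ε, hε, hball⟩ := Metric.isOpen_iff.1 hu a ha
      obtain ⟨n, hn⟩ := exists_nat_one_div_lt (half_pos hε)
      have hrpos : (0 : ℝ) < 1 / (n + 1) := by positivity
      obtain ⟨x, hxD, hx⟩ := hD.exists_dist_lt a hrpos
      refine ⟨Metric.ball x (1 / (n + 1)), ⟨⟨⟨x, hxD⟩, n⟩, rfl⟩, ?_, ?_⟩
      · simpa [Metric.mem_ball] using hx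
      · intro y hy
        apply hball
        have h1 : dist y a ≤ dist y x + dist x a := dist_triangle y x a
        have h2 : dist x a < 1 / (n + 1) := by rwa [dist_comm]
        have h3 : dist y x < 1 / (n + 1) := Metric.mem_ball.1 hy
        have : dist y a < ε := by
          have : dist y a < 1 / (n + 1) + 1 / (n + 1) := by linarith
          have h4 : (1 : ℝ) / (n + 1) + 1 / (n + 1) < ε := by
            have := hn; linarith
          linarith
        exact Metric.mem_ball.2 this
  have h1 : tweight X ≤ #B := csInf_le (OrderBot.bddBelow _) ⟨B, hbasis, rfl⟩
  have h2 : #B ≤ #(D × ℕ) := Cardinal.mk_range_le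
  have h3 : #(↥D × ℕ) = #D * ℵ₀ := by simp
  calc tweight X ≤ #D * ℵ₀ := by rw [← h3]; exact h1.trans h2
    _ ≤ max (max #D ℵ₀) ℵ₀ := Cardinal.mul_le_max _ _
    _ = max #D ℵ₀ := by rw [max_assoc, max_self]

/-- A cover by separable sets yields a dense set of bounded cardinality. -/
lemma dense_of_cover {X : Type} [TopologicalSpace X] {F : Set (Set X)}
    (hF : ∀ Y ∈ F, IsSeparable Y) (hcov : ⋃₀ F = Set.univ) :
    ∃ D : Set X, Dense D ∧ #D ≤ max #F ℵ₀ := by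
  choose c hc hsub using fun (Y : F) => hF Y Y.2
  refine ⟨⋃ Y : F, c Y, ?_, ?_⟩
  · intro x
    have : x ∈ ⋃₀ F := hcov ▸ Set.mem_univ x
    obtain ⟨Y, hY, hxY⟩ := this
    exact closure_mono (Set.subset_iUnion c ⟨Y, hY⟩) (hsub ⟨Y, hY⟩ hxY)
  · calc #(⋃ Y : F, c Y) ≤ #F * ⨆ Y : F, #(c Y) := Cardinal.mk_iUnion_le c
      _ ≤ #F * ℵ₀ := by
          apply mul_le_mul_right
          refine csSup_le' ?_
          rintro κ ⟨Y, rfl⟩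
          exact Cardinal.mk_le_aleph0_iff.2 ((hc Y).to_subtype)
      _ ≤ max (max #F ℵ₀) ℵ₀ := Cardinal.mul_le_max _ _
      _ = max #F ℵ₀ := by rw [max_assoc, max_self]

/-- If a family of Polish subspaces covers a completely metrizable space whose
cellularity is an uncountable cardinal `κ`, then the family has cardinality at
least `κ`.  In particular, for a completely metrizable space of uncountable
weight `κ`, every covering by separable subspaces has cardinality at least `κ`. -/
theorem cov_ge_cellularity :
    (∀ (X : Type) (_ : MetricSpace X) (_ : CompleteSpace X) (κ : Cardinal), ℵ₀ < κ →
      cellularity X = κ → ∀ F : Set (Set X), (∀ Y ∈ F, PolishSpace Y) →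
        ⋃₀ F = Set.univ → κ ≤ #F) ∧
    (∀ (X : Type) (_ : MetricSpace X) (_ : CompleteSpace X) (κ : Cardinal), ℵ₀ < κ →
      tweight X = κ → ∀ F : Set (Set X), (∀ Y ∈ F, SeparableSpace Y) →
        ⋃₀ F = Set.univ → κ ≤ #F) := by
  constructor
  · intro X _ _ κ hκ hcell F hPol hcov
    have hsep : ∀ Y ∈ F, IsSeparable Y := by
      intro Y hY
      haveI := hPol Y hY
      haveI : SeparableSpace Y := inferInstance
      exact IsSeparable.of_subtype Y
    obtain ⟨D, hD, hcard⟩ := dense_of_cover hsep hcov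
    have : κ ≤ max #F ℵ₀ := hcell ▸ (cellularity_le_dense hD).trans hcard
    rcases le_max_iff.1 this with h | h
    · exact h
    · exact absurd h (not_le.2 hκ)
  · intro X _ _ κ hκ htw F hSep hcov
    have hsep : ∀ Y ∈ F, IsSeparable Y := fun Y hY => by
      haveI := hSep Y hY; exact IsSeparable.of_subtype Y
    obtain ⟨D, hD, hcard⟩ := dense_of_cover hsep hcov
    have hmax : max #D ℵ₀ ≤ max #F ℵ₀ := by
      have := max_le_max hcard (le_refl ℵ₀)
      rwa [max_assoc, max_self] at this
    have : κ ≤ max #F ℵ₀ := htw ▸ (tweight_le_dense hD).trans hmax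
    rcases le_max_iff.1 this with h | h
    · exact h
    · exact absurd h (not_le.2 hκ)
end

section
/- Let κ be an uncountable cardinal and give κ the discrete topology. Then the countable product κ^ω can be covered by cf([κ]^{ℵ₀}, ⊆) many Polish subspaces, and every covering of κ^ω by Polish (equivalently, separable) subspaces has cardinality at least cf([κ]^{ℵ₀}, ⊆). -/
open Cardinal Set

/-- For a countable set `s` in a discrete space `A`, the set of functions `ℕ → A`
taking values in `s` is Polish (it is homeomorphic to `ℕ → s`). -/
lemma polish_of_pi_mem (A : Type) [TopologicalSpace A] [DiscreteTopology A]
    (s : Set A) (hc : s.Countable) : PolishSpace {f : ℕ → A | ∀ n, f n ∈ s} := by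
  have : Countable s := hc.to_subtype
  let e : {f : ℕ → A | ∀ n, f n ∈ s} ≃ₜ (ℕ → s) :=
    { toFun := fun f n => ⟨f.1 n, f.2 n⟩
      invFun := fun g => ⟨fun n => (g n : A), fun n => (g n).2⟩
      left_inv := fun f => rfl
      right_inv := fun g => rfl
      continuous_toFun := continuous_pi fun n =>
        Continuous.subtype_mk ((continuous_apply n).comp continuous_subtype_val) _
      continuous_invFun := Continuous.subtype_mk
        (continuous_pi fun n => continuous_subtype_val.comp (continuous_apply n)) _ }
  haveI : PolishSpace s := inferInstance
  exact e.isClosedEmbedding.polishSpace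

/-- For an uncountable discrete `κ`, the space `κ^ω` can be covered by
`cf([κ]^{ℵ₀}, ⊆)` many Polish subspaces, and every covering of `κ^ω` by
separable subspaces has cardinality at least `cf([κ]^{ℵ₀}, ⊆)`. -/
theorem cov_kappa_omega (κ : Cardinal) (hκ : ℵ₀ < κ)
    (A : Type) [TopologicalSpace A] [DiscreteTopology A] (hA : #A = κ) :
    (∃ F : Set (Set (ℕ → A)), (∀ Y ∈ F, PolishSpace Y) ∧ ⋃₀ F = Set.univ ∧
      #F ≤ cofCountableSubsets A) ∧
    (∀ F : Set (Set (ℕ → A)), (∀ Y ∈ F, TopologicalSpace.SeparableSpace Y) →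
      ⋃₀ F = Set.univ → cofCountableSubsets A ≤ #F) := by
  have hinf : Infinite A := Cardinal.infinite_iff.2 (by rw [hA]; exact hκ.le)
  obtain ⟨e⟩ : Nonempty (ℕ ↪ A) := ⟨Infinite.natEmbedding A⟩
  set s₀ : Set A := Set.range e with hs₀
  have hs₀c : s₀.Countable := countable_range e
  have hs₀i : s₀.Infinite := Set.infinite_range_of_injective e.injective
  have hne : { c | ∃ D : Set (Set A), (∀ s ∈ D, s.Countable ∧ s.Infinite) ∧
      (∀ t : Set A, t.Countable → t.Infinite → ∃ s ∈ D, t ⊆ s) ∧ #D = c }.Nonempty := by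
    refine ⟨_, {s : Set A | s.Countable ∧ s.Infinite}, fun s hs => hs,
      fun t htc hti => ⟨t, ⟨htc, hti⟩, subset_rfl⟩, rfl⟩
  constructor
  · -- Upper bound: take a cofinal family `D` realizing the infimum.
    obtain ⟨D, hD1, hD2, hD3⟩ := csInf_mem hne
    refine ⟨(fun s => {f : ℕ → A | ∀ n, f n ∈ s}) '' D, ?_, ?_, ?_⟩
    · rintro Y ⟨s, hs, rfl⟩
      exact polish_of_pi_mem A s (hD1 s hs).1
    · refine Set.eq_univ_of_forall fun f => ?_
      have htc : (Set.range f ∪ s₀).Countable := (countable_range f).union hs₀c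
      have hti : (Set.range f ∪ s₀).Infinite := hs₀i.mono subset_union_right
      obtain ⟨s, hsD, hts⟩ := hD2 _ htc hti
      exact ⟨_, ⟨s, hsD, rfl⟩, fun n => hts (Or.inl ⟨n, rfl⟩)⟩
    · exact le_of_le_of_eq Cardinal.mk_image_le hD3
  · -- Lower bound: the coordinate values of each separable piece form a countable set.
    intro F hSep hcov
    have hV : ∀ Y : ↑F, {a : A | ∃ g ∈ (Y : Set (ℕ → A)), ∃ n, g n = a}.Countable := by
      intro Y
      haveI := hSep Y.1 Y.2
      obtain ⟨d, dct, ddense⟩ := TopologicalSpace.exists_countable_dense ↥(Y : Set (ℕ → A))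
      refine (dct.biUnion (fun f _ => countable_range (fun n => (f : ℕ → A) n))).mono ?_
      rintro a ⟨g, hgY, n, rfl⟩
      have hU : IsOpen {h : ↥(Y : Set (ℕ → A)) | (h : ℕ → A) n = g n} := by
        have : Continuous fun h : ↥(Y : Set (ℕ → A)) => (h : ℕ → A) n :=
          (continuous_apply n).comp continuous_subtype_val
        exact this.isOpen_preimage {g n} (isOpen_discrete _)
      obtain ⟨f, hfd, hf⟩ := ddense.exists_mem_open hU ⟨⟨g, hgY⟩, rfl⟩
      exact Set.mem_biUnion hfd ⟨n, hf⟩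
    set S : ↑F → Set A :=
      fun Y => {a : A | ∃ g ∈ (Y : Set (ℕ → A)), ∃ n, g n = a} ∪ s₀ with hS
    refine le_trans (csInf_le' ⟨Set.range S, ?_, ?_, rfl⟩) Cardinal.mk_range_le
    · rintro s ⟨Y, rfl⟩
      exact ⟨(hV Y).union hs₀c, hs₀i.mono subset_union_right⟩
    · intro t htc hti
      obtain ⟨f, rfl⟩ := Set.Countable.exists_eq_range htc hti.nonempty
      have : f ∈ ⋃₀ F := hcov.symm ▸ Set.mem_univ f
      obtain ⟨Y, hYF, hfY⟩ := this
      exact ⟨S ⟨Y, hYF⟩, ⟨⟨Y, hYF⟩, rfl⟩, by rintro a ⟨n, rfl⟩; exact Or.inl ⟨f, hfY, n, rfl⟩⟩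
end

section
/- Let X be a metrizable space and B a basis for X such that every point of X lies in only countably many members of B. For each countable A ⊆ B, the set Y_A = {x ∈ X : every member of B containing x belongs to A} is a closed, second countable subspace of X, and the family {Y_A : A ∈ D} covers X whenever D is cofinal in the countable subsets of B under inclusion. -/
open Set TopologicalSpace

/-- Given a point-countable basis `B` of a metrizable space `X` and a countable
`A ⊆ B`, the set `Y_A = {x : {U ∈ B | x ∈ U} ⊆ A}` is a closed, second countable
subspace, and the `Y_A` for `A` ranging over a cofinal family of countable subsets
of `B` cover `X`. -/
theorem closed_second_countable_pieces (X : Type) [TopologicalSpace X]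
    [MetrizableSpace X] (B : Set (Set X)) (hB : IsTopologicalBasis B)
    (hpc : ∀ x : X, {U ∈ B | x ∈ U}.Countable) :
    (∀ A : Set (Set X), A ⊆ B → A.Countable →
      IsClosed {x : X | {U ∈ B | x ∈ U} ⊆ A} ∧
      SecondCountableTopology {x : X | {U ∈ B | x ∈ U} ⊆ A}) ∧
    (∀ D : Set (Set (Set X)), (∀ A ∈ D, A ⊆ B ∧ A.Countable) →
      (∀ A : Set (Set X), A ⊆ B → A.Countable → ∃ A' ∈ D, A ⊆ A') →
      ⋃ A ∈ D, {x : X | {U ∈ B | x ∈ U} ⊆ A} = Set.univ) := by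
  constructor
  · intro A hAB hAc
    set Y : Set X := {x : X | {U ∈ B | x ∈ U} ⊆ A} with hY
    have hclosed : IsClosed Y := by
      rw [← isOpen_compl_iff]
      rw [isOpen_iff_mem_nhds]
      intro x hx
      simp only [mem_compl_iff, hY, mem_setOf_eq, not_subset] at hx
      obtain ⟨U, ⟨hUB, hxU⟩, hUA⟩ := hx
      refine Filter.mem_of_superset ((hB.isOpen hUB).mem_nhds hxU) ?_
      intro y hyU
      simp only [mem_compl_iff, hY, mem_setOf_eq, not_subset]
      exact ⟨U, ⟨hUB, hyU⟩, hUA⟩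
    refine ⟨hclosed, ?_⟩
    -- second countability via the countable basis {U ∩ Y : U ∈ A}
    have hbasis : IsTopologicalBasis
        ((fun U => (Subtype.val ⁻¹' U : Set Y)) '' A) := by
      refine isTopologicalBasis_of_isOpen_of_nhds ?_ ?_
      · rintro _ ⟨U, hU, rfl⟩
        exact (hB.isOpen (hAB hU)).preimage continuous_subtype_val
      · rintro ⟨x, hxY⟩ V hxV hVopen
        obtain ⟨W, hWopen, rfl⟩ := isOpen_induced_iff.mp hVopen
        obtain ⟨U, hUB, hxU, hUW⟩ := hB.exists_subset_of_mem_open hxV hWopen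
        have hUA : U ∈ A := hxY ⟨hUB, hxU⟩
        exact ⟨Subtype.val ⁻¹' U, ⟨U, hUA, rfl⟩, hxU,
          fun y hy => hUW hy⟩
    exact hbasis.secondCountableTopology (hAc.image _)
  · intro D hD hcof
    ext x
    simp only [mem_iUnion, mem_univ, iff_true, mem_setOf_eq]
    obtain ⟨A', hA'D, hsub⟩ := hcof {U ∈ B | x ∈ U} (fun U hU => hU.1) (hpc x)
    exact ⟨A', hA'D, fun U hU => hsub hU⟩
end

section
/- Let κ be a cardinal with uncountable cofinality and let X be a completely metrizable space of weight κ. Then X can be partitioned into at most κ completely metrizable subspaces, each of weight strictly less than κ. -/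
open Cardinal Set TopologicalSpace

/-- If a subset `Y` of a metric space lies in the closure of `S`, then the weight of `Y`
is at most `max #S ℵ₀`. -/
lemma tweight_le_of_subset_closure {X : Type} [MetricSpace X] {Y S : Set X}
    (hY : Y ⊆ closure S) : tweight Y ≤ max #S ℵ₀ := by
  classical
  set b : S × ℕ → Set Y := fun p => {y : Y | dist (y : X) (p.1 : X) < 1 / (p.2 + 1)} with hb
  have hbasis : IsTopologicalBasis (Set.range b) := by
    apply isTopologicalBasis_of_isOpen_of_nhds
    · rintro u ⟨⟨s, n⟩, rfl⟩
      have heq : b (s, n) = (Subtype.val : Y → X) ⁻¹' Metric.ball (s : X) (1 / (n + 1)) := by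
        ext y; simp [hb, Metric.mem_ball]
      rw [heq]
      exact Metric.isOpen_ball.preimage continuous_subtype_val
    · rintro a u ha hu
      rcases isOpen_induced_iff.1 hu with ⟨V, hV, rfl⟩
      rcases Metric.isOpen_iff.1 hV _ ha with ⟨ε, hε, hball⟩
      rcases exists_nat_one_div_lt (by linarith : (0 : ℝ) < ε / 2) with ⟨n, hn⟩
      have hac : (a : X) ∈ closure S := hY a.2
      have hpos : (0 : ℝ) < 1 / (n + 1) := by positivity
      rcases Metric.mem_closure_iff.1 hac _ hpos with ⟨s, hs, hdist⟩
      refine ⟨b (⟨s, hs⟩, n), ⟨_, rfl⟩, ?_, ?_⟩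
      · simpa [hb] using hdist
      · intro y hy
        simp only [hb, mem_setOf_eq] at hy
        have hya : dist (y : X) (a : X) < ε := by
          calc dist (y : X) (a : X) ≤ dist (y : X) s + dist s (a : X) := dist_triangle _ _ _
            _ = dist (y : X) s + dist (a : X) s := by rw [dist_comm s]
            _ < 1 / (n + 1) + 1 / (n + 1) := by exact add_lt_add hy hdist
            _ < ε / 2 + ε / 2 := by exact add_lt_add hn hn
            _ = ε := by ring
        exact hball hya
  have h1 : tweight Y ≤ #(Set.range b) :=
    csInf_le (OrderBot.bddBelow _) ⟨Set.range b, hbasis, rfl⟩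
  calc tweight Y ≤ #(Set.range b) := h1
    _ ≤ #(S × ℕ) := mk_range_le
    _ = #S * ℵ₀ := by simp
    _ ≤ max (max #S ℵ₀) ℵ₀ := mul_le_max _ _
    _ = max #S ℵ₀ := by simp

/-- Every topological space has a dense subset of cardinality at most its weight. -/
lemma exists_dense_le_tweight (X : Type) [TopologicalSpace X] :
    ∃ D : Set X, Dense D ∧ #D ≤ tweight X := by
  classical
  have hne : { c | ∃ B : Set (Set X), IsTopologicalBasis B ∧ #B = c }.Nonempty :=
    ⟨_, {U : Set X | IsOpen U}, isTopologicalBasis_opens, rfl⟩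
  obtain ⟨B, hB, hBc⟩ := csInf_mem hne
  set f : {U : B // (U : Set X).Nonempty} → X := fun U => U.2.choose with hf
  refine ⟨Set.range f, ?_, ?_⟩
  · rw [dense_iff_inter_open]
    rintro V hV ⟨x, hx⟩
    obtain ⟨U, hU, hxU, hUV⟩ := hB.exists_subset_of_mem_open hx hV
    have hUne : (U : Set X).Nonempty := ⟨x, hxU⟩
    exact ⟨f ⟨⟨U, hU⟩, hUne⟩, hUV hUne.choose_spec, ⟨_, rfl⟩⟩
  · calc #(Set.range f) ≤ #{U : B // (U : Set X).Nonempty} := mk_range_le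
      _ ≤ #B := mk_le_of_injective Subtype.coe_injective
      _ = tweight X := hBc

/-- If `κ` has uncountable cofinality and `X` is a completely metrizable space of
weight `κ`, then `X` can be partitioned into at most `κ` completely metrizable
(equivalently, `G_δ`) subspaces, each of weight `< κ`. -/
theorem partition_into_smaller_weight (κ : Cardinal) (hcf : ℵ₀ < κ.ord.cof)
    (X : Type) [MetricSpace X] [CompleteSpace X] (hw : tweight X = κ) :
    ∃ P : Set (Set X), P.PairwiseDisjoint id ∧ ⋃₀ P = Set.univ ∧ #P ≤ κ ∧
      ∀ Y ∈ P, IsGδ Y ∧ tweight Y < κ := by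
  classical
  have hκ : ℵ₀ < κ := hcf.trans_le (Ordinal.cof_ord_le κ)
  -- `X` is nonempty
  have hXne : Nonempty X := by
    by_contra h
    rw [not_nonempty_iff] at h
    have h0 : tweight X ≤ 0 := csInf_le (OrderBot.bddBelow _)
      ⟨∅, isTopologicalBasis_of_isOpen_of_nhds (by simp) (fun a => (h.false a).elim), by simp⟩
    rw [hw] at h0
    exact absurd (lt_of_lt_of_le hκ h0) (by simp)
  -- a dense subset of size at most κ
  obtain ⟨D, hD, hDκ⟩ := exists_dense_le_tweight X
  rw [hw] at hDκ
  let ι := κ.ord.ToType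
  letI : IsWellOrder ι (· < ·) := isWellOrder_lt
  have hι : #ι = κ := Cardinal.mk_ord_toType κ
  have hDne : D.Nonempty := hD.nonempty
  have : Nonempty ↥D := hDne.to_subtype
  have hDι : #↥D ≤ #ι := by rw [hι]; exact hDκ
  obtain ⟨e⟩ := hDι
  set d : ι → X := fun i => ((Function.invFun e i : ↥D) : X) with hd
  have hdense : Dense (Set.range d) := by
    have hsurj : Function.Surjective (Function.invFun e) := Function.invFun_surjective e.injective
    have hrange : Set.range d = D := by
      rw [show d = Subtype.val ∘ Function.invFun e from rfl, Set.range_comp,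
        hsurj.range_eq, Set.image_univ, Subtype.range_coe]
    rwa [hrange]
  -- the increasing family of closed sets
  set F : ι → Set X := fun α => closure (d '' {β | β < α}) with hF
  have Fmono : ∀ {α β : ι}, α ≤ β → F α ⊆ F β := fun h =>
    closure_mono (Set.image_mono fun γ hγ => lt_of_lt_of_le hγ h)
  have Fclosed : ∀ α, IsClosed (F α) := fun α => isClosed_closure
  -- cofinality: any countable sequence in ι is bounded
  have bound : ∀ s : ℕ → ι, ∃ α : ι, ∀ n, s n < α := by
    intro s
    have hlim : Order.IsSuccLimit κ.ord := Cardinal.isSuccLimit_ord hκ.le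
    set f : ℕ → Ordinal := fun n => Ordinal.typein (α := ι) (· < ·) (s n) with hfdef
    have hf : ∀ n, f n < κ.ord := fun n => by
      have := Ordinal.typein_lt_type (α := ι) (· < ·) (s n)
      rwa [Ordinal.type_toType] at this
    have hsup : (⨆ n, f n) < κ.ord := Ordinal.iSup_lt_ord (by simpa using hcf) hf
    have hsup1 : Order.succ (⨆ n, f n) < κ.ord := hlim.succ_lt hsup
    have hsup1' : Order.succ (⨆ n, f n) < Ordinal.type (α := ι) (· < ·) := by
      rwa [Ordinal.type_toType]
    refine ⟨Ordinal.enum (α := ι) (· < ·) ⟨Order.succ (⨆ n, f n), hsup1'⟩, fun n => ?_⟩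
    have h1 : f n < Order.succ (⨆ n, f n) :=
      Order.lt_succ_of_le (le_ciSup (Ordinal.bddAbove_range f) n)
    have h2 := (Ordinal.typein_lt_typein (α := ι) (· < ·)
      (a := s n) (b := Ordinal.enum (α := ι) (· < ·) ⟨Order.succ (⨆ n, f n), hsup1'⟩))
    rw [Ordinal.typein_enum] at h2
    exact h2.1 h1
  -- every point appears in some F α
  have cover : ∀ x : X, ∃ α : ι, x ∈ F α := by
    intro x
    have hx : x ∈ closure (Set.range d) := hdense x
    have hsel : ∀ n : ℕ, ∃ β : ι, dist x (d β) < 1 / (n + 1) := by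
      intro n
      have hpos : (0 : ℝ) < 1 / (n + 1) := by positivity
      rcases Metric.mem_closure_iff.1 hx _ hpos with ⟨b, ⟨β, rfl⟩, hb⟩
      exact ⟨β, hb⟩
    choose s hs using hsel
    obtain ⟨α, hα⟩ := bound s
    refine ⟨α, ?_⟩
    rw [hF, Metric.mem_closure_iff]
    intro ε hε
    obtain ⟨n, hn⟩ := exists_nat_one_div_lt hε
    exact ⟨d (s n), ⟨s n, hα n, rfl⟩, (hs n).trans hn⟩
  -- the partition
  set Z : ι → Set X := fun α => F α \ ⋃ (β) (_ : β < α), F β with hZ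
  refine ⟨Set.range Z, ?_, ?_, ?_, ?_⟩
  · -- pairwise disjoint
    rintro u ⟨α, rfl⟩ v ⟨α', rfl⟩ huv
    refine Set.disjoint_left.2 fun x hxα hxα' => ?_
    rcases lt_trichotomy α α' with h | h | h
    · exact hxα'.2 (Set.mem_iUnion₂.2 ⟨α, h, hxα.1⟩)
    · exact huv (by rw [h])
    · exact hxα.2 (Set.mem_iUnion₂.2 ⟨α', h, hxα'.1⟩)
  · -- covers
    apply Set.eq_univ_of_forall
    intro x
    have hne : {α : ι | x ∈ F α}.Nonempty := cover x
    obtain ⟨α, hα, hmin⟩ := (IsWellFounded.wf (r := ((· < ·) : ι → ι → Prop))).has_min _ hne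
    refine Set.mem_sUnion.2 ⟨Z α, ⟨α, rfl⟩, hα, ?_⟩
    intro hmem
    obtain ⟨β, hβα, hxβ⟩ := Set.mem_iUnion₂.1 hmem
    exact hmin β hxβ hβα
  · -- cardinality
    exact mk_range_le.trans hι.le
  · -- each piece is Gδ of small weight
    rintro Y ⟨α, rfl⟩
    constructor
    · -- Gδ
      have hU : IsGδ ((⋃ (β) (_ : β < α), F β)ᶜ) := by
        by_cases hc : ∃ c : Set ι, c.Countable ∧ (∀ γ ∈ c, γ < α) ∧ ∀ β < α, ∃ γ ∈ c, β ≤ γ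
        · obtain ⟨c, hcc, hcsub, hccof⟩ := hc
          have heq : (⋃ (β) (_ : β < α), F β) = ⋃ γ ∈ c, F γ := by
            apply subset_antisymm
            · refine Set.iUnion₂_subset fun β hβ => ?_
              obtain ⟨γ, hγc, hβγ⟩ := hccof β hβ
              exact (Fmono hβγ).trans (Set.subset_iUnion₂ (s := fun γ (_ : γ ∈ c) => F γ) γ hγc)
            · exact Set.iUnion₂_subset fun γ hγ => Set.subset_iUnion₂ (s := fun β (_ : β < α) => F β) γ (hcsub γ hγ)
          rw [heq, Set.compl_iUnion₂]
          exact IsGδ.biInter hcc fun γ _ => (Fclosed γ).isOpen_compl.isGδ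
        · have hclosed : IsClosed (⋃ (β) (_ : β < α), F β) := by
            have hseq : IsSeqClosed (⋃ (β) (_ : β < α), F β) := by
              intro xk p hxk hlim2
              choose γ hγα hxγ using fun k => Set.mem_iUnion₂.1 (hxk k)
              push_neg at hc
              obtain ⟨β, hβα, hβ⟩ := hc (Set.range γ) (Set.countable_range γ)
                (by rintro _ ⟨k, rfl⟩; exact hγα k)
              have hmem : ∀ k, xk k ∈ F β := fun k =>
                Fmono (le_of_lt (hβ (γ k) ⟨k, rfl⟩)) (hxγ k)
              have : p ∈ F β := (Fclosed β).mem_of_tendsto hlim2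
                (Filter.Eventually.of_forall hmem)
              exact Set.mem_iUnion₂.2 ⟨β, hβα, this⟩
            exact hseq.isClosed
          exact hclosed.isOpen_compl.isGδ
      exact (Fclosed α).isGδ.inter hU
    · -- weight
      have h1 : tweight (Z α) ≤ max #(d '' {β | β < α}) ℵ₀ :=
        tweight_le_of_subset_closure Set.diff_subset
      have h2 : #(d '' {β | β < α}) < κ :=
        lt_of_le_of_lt Cardinal.mk_image_le (Cardinal.mk_Iio_ord_toType α)
      exact h1.trans_lt (max_lt h2 hκ)
end

section
/- If the continuum 𝔠 satisfies 𝔠 < ℵ_{ω+1}, then for every completely metrizable space X, the minimal cardinality of a covering of X by Polish spaces equals the minimal cardinality of a partition of X into Polish spaces. -/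
open Cardinal Set TopologicalSpace Topology Metric Filter
open Cardinal Set TopologicalSpace Topology Metric Filter

theorem gdelta_polish {α : Type} [TopologicalSpace α] [PolishSpace α] {s : Set α}
    (hs : IsGδ s) : PolishSpace s := by
  letI := upgradeIsCompletelyMetrizable α
  obtain ⟨T, hTo, hTc, rfl⟩ := hs
  rcases eq_empty_or_nonempty T with rfl | hTne
  · rw [sInter_empty]; exact IsClosed.polishSpace isClosed_univ
  obtain ⟨U, rfl⟩ := hTc.exists_eq_range hTne
  have hUo : ∀ n, IsOpen (U n) := fun n => hTo _ ⟨n, rfl⟩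
  rw [sInter_range]
  set s : Set α := ⋂ n, U n with hs_def
  have hsub : ∀ (x : s) (n : ℕ), (x : α) ∈ U n := fun x n => mem_iInter.1 x.2 n
  -- the embedding
  set g : α → ℕ → ℝ := fun x n => 1 / infDist x (U n)ᶜ with hg
  set F : s → α × (ℕ → ℝ) := fun x => ((x : α), g x) with hF
  have hgc : ∀ n : ℕ, Continuous fun x : s => g x n := by
    intro n
    rcases eq_empty_or_nonempty (U n)ᶜ with he | hne
    · have : (fun x : s => g x n) = fun _ => 0 := by
        funext x; simp [hg, he, infDist_empty]
      rw [this]; exact continuous_const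
    · apply continuous_const.div ((continuous_infDist_pt _).comp continuous_subtype_val)
      intro x
      have : (x : α) ∉ (U n)ᶜ := fun h => h (hsub x n)
      exact ne_of_gt (((hUo n).isClosed_compl.notMem_iff_infDist_pos hne).1 this)
  have hFc : Continuous F :=
    continuous_subtype_val.prodMk (continuous_pi hgc)
  have hFe : IsEmbedding F :=
    IsEmbedding.of_comp hFc continuous_fst IsEmbedding.subtypeVal
  have hFcl : IsClosed (range F) := by
    apply IsSeqClosed.isClosed
    intro p q hp hq
    -- p k ∈ range F, p → q
    choose x hx using hp
    have hx1 : Tendsto (fun k => (x k : α)) atTop (𝓝 q.1) := by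
      have h1 := (continuous_fst.tendsto q).comp hq
      have e : (fun k => (x k : α)) = Prod.fst ∘ p := funext fun k => by show _ = (p k).1; rw [← hx k]
      rw [e]; exact h1
    have hx2 : ∀ n, Tendsto (fun k => g (x k) n) atTop (𝓝 (q.2 n)) := by
      intro n
      have := ((continuous_apply n).comp continuous_snd).tendsto q |>.comp hq
      have e : ∀ k, g (x k) n = (p k).2 n := fun k => by rw [← hx k]
      simpa [Function.comp_def, e] using this
    have hdist : ∀ n, Tendsto (fun k => infDist (x k : α) (U n)ᶜ) atTop
        (𝓝 (infDist q.1 (U n)ᶜ)) := fun n =>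
      ((continuous_infDist_pt _).tendsto _).comp hx1
    have hq1 : q.1 ∈ s := by
      rw [hs_def, mem_iInter]
      intro n
      rcases eq_empty_or_nonempty (U n)ᶜ with he | hne
      · have hU : U n = Set.univ := by rw [← compl_compl (U n), he, compl_empty]
        rw [hU]; trivial
      by_contra hqn
      have hd0 : infDist q.1 (U n)ᶜ = 0 := by
        have : q.1 ∈ (U n)ᶜ := hqn
        exact infDist_zero_of_mem this
      -- product trick : (infDist x_k) * (1/infDist x_k) = 1 → 0 * q.2 n = 0
      have hpos : ∀ k, infDist (x k : α) (U n)ᶜ ≠ 0 := by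
        intro k
        have : (x k : α) ∉ (U n)ᶜ := fun h => h (hsub (x k) n)
        exact ne_of_gt (((hUo n).isClosed_compl.notMem_iff_infDist_pos hne).1 this)
      have hone : Tendsto (fun k => infDist (x k : α) (U n)ᶜ * g (x k) n) atTop (𝓝 (0 * q.2 n)) := by
        rw [← hd0]
        exact (hdist n).mul (hx2 n)
      have : Tendsto (fun _ : ℕ => (1 : ℝ)) atTop (𝓝 (0 * q.2 n)) := by
        refine hone.congr fun k => ?_
        show infDist (↑(x k)) (U n)ᶜ * (1 / infDist (↑(x k)) (U n)ᶜ) = 1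
        rw [mul_one_div, div_self (hpos k)]
      have h01 := tendsto_nhds_unique this tendsto_const_nhds
      simp at h01
    refine ⟨⟨q.1, hq1⟩, ?_⟩
    have hq2 : ∀ n, q.2 n = g q.1 n := by
      intro n
      rcases eq_empty_or_nonempty (U n)ᶜ with he | hne
      · have : ∀ k, g (x k) n = 0 := fun k => by simp [hg, he, infDist_empty]
        have h0 : Tendsto (fun k => g (x k) n) atTop (𝓝 (0:ℝ)) := by
          simp only [this]; exact tendsto_const_nhds
        have := tendsto_nhds_unique (hx2 n) h0
        simp [hg, he, infDist_empty, this]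
      · have hqpos : infDist q.1 (U n)ᶜ ≠ 0 := by
          have : q.1 ∉ (U n)ᶜ := fun h => h (mem_iInter.1 hq1 n)
          exact ne_of_gt (((hUo n).isClosed_compl.notMem_iff_infDist_pos hne).1 this)
        have hdiv : Tendsto (fun k => (1:ℝ) / infDist (↑(x k)) (U n)ᶜ) atTop
            (𝓝 (1 / infDist q.1 (U n)ᶜ)) := tendsto_const_nhds.div (hdist n) hqpos
        have : Tendsto (fun k => g (x k) n) atTop (𝓝 (g q.1 n)) := hdiv
        exact tendsto_nhds_unique (hx2 n) this
    have : g q.1 = q.2 := by funext n; exact (hq2 n).symm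
    simp [hF, this]
  exact (IsClosedEmbedding.mk hFe hFcl).polishSpace

theorem gdelta_preimage {β γ : Type} [TopologicalSpace β] [TopologicalSpace γ] {f : β → γ}
    (hf : Continuous f) {t : Set γ} (ht : IsGδ t) : IsGδ (f ⁻¹' t) := by
  obtain ⟨T, hTo, hTc, rfl⟩ := ht
  rw [preimage_sInter]
  exact IsGδ.biInter_of_isOpen hTc fun t ht' => (hTo t ht').preimage hf

theorem polish_of_gdelta_sep {X : Type} [MetricSpace X] [CompleteSpace X] {A : Set X}
    (hA : IsGδ A) (hsep : TopologicalSpace.IsSeparable A) : PolishSpace A := by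
  obtain ⟨c, hcc, hAc⟩ := hsep
  set B : Set X := closure c with hB
  haveI : SeparableSpace ↥B := (hcc.isSeparable.closure).separableSpace
  haveI : SecondCountableTopology ↥B := UniformSpace.secondCountable_of_separable _
  haveI : CompleteSpace ↥B := isClosed_closure.completeSpace_coe
  haveI : PolishSpace ↥B := inferInstance
  set s : Set ↥B := Subtype.val ⁻¹' A with hs
  haveI hsp : PolishSpace ↥s := gdelta_polish (gdelta_preimage continuous_subtype_val hA)
  have hAB : A ⊆ B := hAc
  let e : ↥A ≃ₜ ↥s :=
    { toFun := fun a => ⟨⟨a.1, hAB a.2⟩, a.2⟩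
      invFun := fun x => ⟨x.1.1, x.2⟩
      left_inv := fun a => rfl
      right_inv := fun x => rfl
      continuous_toFun := Continuous.subtype_mk (Continuous.subtype_mk continuous_subtype_val _) _
      continuous_invFun := (continuous_subtype_val.comp continuous_subtype_val).subtype_mk _ }
  exact e.isClosedEmbedding.polishSpace

theorem isSeparable_of_polish {X : Type} [MetricSpace X] {Y : Set X} (h : PolishSpace Y) :
    TopologicalSpace.IsSeparable Y := by
  haveI := h
  haveI : SeparableSpace ↥Y := inferInstance
  obtain ⟨t, htc, htd⟩ := exists_countable_dense ↥Y
  refine ⟨Subtype.val '' t, htc.image _, fun y hy => ?_⟩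
  have h1 : (⟨y, hy⟩ : ↥Y) ∈ closure t := htd _
  exact image_closure_subset_closure_image continuous_subtype_val
    (mem_image_of_mem _ h1)

theorem mk_le_continuum_of_isSeparable {X : Type} [MetricSpace X] {Y : Set X}
    (h : TopologicalSpace.IsSeparable Y) : #Y ≤ continuum := by
  obtain ⟨c, hcc, hYc⟩ := h
  rcases eq_empty_or_nonempty Y with rfl | hYne
  · simp
  have hcne : c.Nonempty := by
    obtain ⟨y, hy⟩ := hYne
    exact closure_nonempty_iff.1 ⟨y, hYc hy⟩
  obtain ⟨f, rfl⟩ := hcc.exists_eq_range hcne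
  have hex : ∀ (y : ↥Y) (n : ℕ), ∃ k, dist (y : X) (f k) < 1 / (n + 1) := by
    intro y n
    have hy : (y : X) ∈ closure (range f) := hYc y.2
    rw [Metric.mem_closure_iff] at hy
    obtain ⟨b, ⟨k, rfl⟩, hb⟩ := hy (1 / (n + 1)) (by positivity)
    exact ⟨k, hb⟩
  choose φ hφ using hex
  have hinj : Function.Injective φ := by
    intro y y' he
    have hd : ∀ n : ℕ, dist (y : X) (y' : X) ≤ 2 / (n + 1) := by
      intro n
      have h1 := hφ y n
      have h2 := hφ y' n
      rw [he] at h1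
      calc dist (y : X) (y' : X) ≤ dist (y : X) (f (φ y' n)) + dist (f (φ y' n)) (y' : X) :=
            dist_triangle _ _ _
        _ ≤ 1 / (n + 1) + 1 / (n + 1) := by
            rw [dist_comm (f (φ y' n))]
            exact add_le_add h1.le h2.le
        _ = 2 / (n + 1) := by ring
    have hlim : Tendsto (fun n : ℕ => 2 / ((n : ℝ) + 1)) atTop (𝓝 0) := by
      have := tendsto_one_div_add_atTop_nhds_zero_nat (𝕜 := ℝ)
      have h2 := this.const_mul (2 : ℝ)
      simpa [mul_one_div, div_eq_mul_inv] using h2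
    have h0 : dist (y : X) (y' : X) ≤ 0 := ge_of_tendsto' hlim hd
    exact Subtype.ext (eq_of_dist_eq_zero (le_antisymm h0 dist_nonneg))
  calc #↥Y ≤ #(ℕ → ℕ) := mk_le_of_injective hinj
    _ = ℵ₀ ^ ℵ₀ := by rw [← Cardinal.power_def, Cardinal.mk_nat]
    _ = continuum := aleph0_power_aleph0

theorem main_partition {X : Type} [MetricSpace X] [CompleteSpace X] :
    ∀ (n : ℕ) (A D : Set X), IsGδ A → A ⊆ closure D → #D ≤ aleph n →
      ∃ P : Set (Set X), (∀ Y ∈ P, PolishSpace Y) ∧ P.PairwiseDisjoint id ∧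
        ⋃₀ P = A ∧ #P ≤ aleph n := by
  intro n
  induction n with
  | zero =>
    intro A D hA hAD hD
    have hDc : D.Countable := by
      rw [← Set.countable_coe_iff, ← Cardinal.mk_le_aleph0_iff]
      simpa [Cardinal.aleph_zero] using hD
    have hP : PolishSpace A := polish_of_gdelta_sep hA ⟨D, hDc, hAD⟩
    refine ⟨{A}, ?_, ?_, sUnion_singleton _, ?_⟩
    · intro Y hY; rw [mem_singleton_iff] at hY; subst hY; exact hP
    · simp [Set.PairwiseDisjoint, Set.Pairwise]
    · rw [mk_singleton]; simpa [Cardinal.aleph_zero] using one_le_aleph0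
  | succ n IH =>
    intro A D hA hAD hD
    set κ := aleph ((n + 1 : ℕ) : Ordinal) with hκ
    have hIcard : #κ.ord.ToType = κ := by rw [mk_toType, card_ord]
    have hκsucc : κ = Order.succ (aleph (n : Ordinal)) := by
      rw [hκ, Nat.cast_succ, Ordinal.add_one_eq_succ, aleph_succ]
    have hseg : ∀ i : κ.ord.ToType, #{j : κ.ord.ToType | j < i} ≤ aleph (n : Ordinal) := by
      intro i
      have h3 := Cardinal.mk_Iio_ord_toType i
      exact Order.lt_succ_iff.1 (h3.trans_eq hκsucc)
    haveI hNI : Nonempty κ.ord.ToType := mk_ne_zero_iff.1 (by rw [hIcard, hκ]; exact (aleph_pos _).ne')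
    obtain ⟨φ⟩ : Nonempty (↥D ↪ κ.ord.ToType) := by
      rw [← Cardinal.le_def, hIcard]; exact hD
    set S : κ.ord.ToType → Set X := fun i => Subtype.val '' {d : ↥D | φ d < i} with hS
    set Cl : κ.ord.ToType → Set X := fun i => closure (S i) with hCl
    have hmono : ∀ {i j : κ.ord.ToType}, i ≤ j → Cl i ⊆ Cl j := fun {i j} h =>
      closure_mono (image_mono fun d hd => lt_of_lt_of_le hd h)
    have hbdd : ∀ s : Set κ.ord.ToType, s.Countable → ∃ i : κ.ord.ToType, ∀ j ∈ s, j < i := by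
      intro s hs
      by_contra hcon
      push_neg at hcon
      have hIic : ∀ j : κ.ord.ToType, #↥(Set.Iic j) ≤ aleph (n : Ordinal) := by
        intro j
        have hsub : (Set.Iic j) ⊆ {k : κ.ord.ToType | k < j} ∪ {j} := by
          intro k hk
          rcases (mem_Iic.1 hk).lt_or_eq with h | h
          · exact Or.inl h
          · exact Or.inr (by simp [h])
        calc #↥(Set.Iic j) ≤ #↥({k : κ.ord.ToType | k < j} ∪ {j} : Set κ.ord.ToType) := mk_le_mk_of_subset hsub
          _ ≤ #↥{k : κ.ord.ToType | k < j} + #↥({j} : Set κ.ord.ToType) := mk_union_le _ _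
          _ ≤ aleph (n : Ordinal) + aleph (n : Ordinal) := by
              refine add_le_add (hseg j) ?_
              rw [mk_singleton]
              exact one_le_aleph0.trans (aleph0_le_aleph _)
          _ = aleph (n : Ordinal) := add_eq_self (aleph0_le_aleph _)
      have hcov : (Set.univ : Set κ.ord.ToType) ⊆ ⋃ j ∈ s, Set.Iic j := by
        intro i _
        obtain ⟨j, hjs, hj⟩ := hcon i
        exact mem_biUnion hjs hj
      have h1 : κ ≤ #↥(⋃ j ∈ s, Set.Iic j) := by
        refine hIcard.ge.trans ?_
        exact (Cardinal.mk_univ (α := κ.ord.ToType)) ▸ Cardinal.mk_le_mk_of_subset hcov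
      have h2 := Cardinal.mk_biUnion_le (fun j : κ.ord.ToType => Set.Iic j) s
      have h3 : #↥s * ⨆ j : ↥s, #↥(Set.Iic (j : κ.ord.ToType)) ≤ ℵ₀ * aleph (n : Ordinal) := by
        refine mul_le_mul' ?_ (ciSup_le' fun j => hIic _)
        haveI := hs.to_subtype
        exact mk_le_aleph0
      have h4 : κ ≤ aleph (n : Ordinal) := by
        refine (h1.trans (h2.trans h3)).trans ?_
        rw [Cardinal.mul_eq_max (le_refl ℵ₀) (aleph0_le_aleph _)]
        exact max_le (aleph0_le_aleph _) le_rfl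
      have h5 : aleph (n : Ordinal) < κ := by
        rw [hκ]
        exact aleph_lt_aleph.2 (by exact_mod_cast Nat.lt_succ_self n)
      exact absurd h4 (not_le.2 h5)
    have hcovA : ∀ a ∈ A, ∃ i : κ.ord.ToType, a ∈ Cl i := by
      intro a ha
      have hcl := hAD ha
      rw [mem_closure_iff_seq_limit] at hcl
      obtain ⟨u, hu, hul⟩ := hcl
      obtain ⟨i, hi⟩ := hbdd (range fun k => φ ⟨u k, hu k⟩) (countable_range _)
      refine ⟨i, mem_closure_iff_seq_limit.2 ⟨u, fun k => ?_, hul⟩⟩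
      exact ⟨⟨u k, hu k⟩, hi _ (mem_range_self k), rfl⟩
    have wf : WellFounded ((· < ·) : κ.ord.ToType → κ.ord.ToType → Prop) := wellFounded_lt
    set r : ∀ a : X, a ∈ A → κ.ord.ToType := fun a ha => wf.min {i : κ.ord.ToType | a ∈ Cl i} (hcovA a ha) with hr
    set Q : κ.ord.ToType → Set X := fun i => {a | ∃ ha : a ∈ A, r a ha = i} with hQdef
    have hQ : ∀ (i : κ.ord.ToType) (a : X), a ∈ Q i ↔ a ∈ A ∧ a ∈ Cl i ∧ ∀ j, j < i → a ∉ Cl j := by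
      intro i a
      constructor
      · rintro ⟨ha, rfl⟩
        refine ⟨ha, wf.min_mem _ (hcovA a ha), fun j hj haj => ?_⟩
        exact absurd hj (wf.not_lt_min _ haj)
      · rintro ⟨ha, hai, hmin⟩
        refine ⟨ha, ?_⟩
        have h1 : ¬ i < r a ha := wf.not_lt_min _ hai
        have h2 : ¬ r a ha < i := fun h => hmin _ h (wf.min_mem _ (hcovA a ha))
        exact le_antisymm (not_lt.1 h1) (not_lt.1 h2)
    have hQA : ∀ i, Q i ⊆ A := fun i a hx => hx.1
    have hQU : ⋃ i, Q i = A := by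
      apply Subset.antisymm (iUnion_subset hQA)
      intro a ha
      exact mem_iUnion.2 ⟨r a ha, ha, rfl⟩
    have hQdisj : ∀ i j, i ≠ j → Disjoint (Q i) (Q j) := by
      intro i j hij
      rw [Set.disjoint_left]
      rintro a ⟨ha, rfl⟩ ⟨ha', he⟩
      exact hij he
    have key : ∀ i : κ.ord.ToType, ∃ P : Set (Set X), (∀ Y ∈ P, PolishSpace Y) ∧ P.PairwiseDisjoint id ∧
        ⋃₀ P = Q i ∧ #P ≤ aleph (n : Ordinal) := by
      intro i
      have hScard : #↥(S i) ≤ aleph (n : Ordinal) := by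
        refine le_trans mk_image_le ?_
        refine le_trans (mk_le_of_injective
          (f := fun d : {d : ↥D | φ d < i} => (⟨φ d.1, d.2⟩ : {j : κ.ord.ToType | j < i})) ?_) (hseg i)
        rintro ⟨d, hd⟩ ⟨d', hd'⟩ h
        simp only [Subtype.mk_eq_mk] at h
        exact Subtype.ext (φ.injective h)
      by_cases hcof : ∃ f : ℕ → κ.ord.ToType, (∀ k, f k < i) ∧ ∀ j, j < i → ∃ k, j ≤ f k
      · obtain ⟨f, hf1, hf2⟩ := hcof
        have hQi : Q i = A ∩ Cl i ∩ ⋂ k, (Cl (f k))ᶜ := by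
          ext a
          rw [hQ i a]
          constructor
          · rintro ⟨ha, hai, hmin⟩
            exact ⟨⟨ha, hai⟩, mem_iInter.2 fun k => hmin _ (hf1 k)⟩
          · rintro ⟨⟨ha, hai⟩, hint⟩
            refine ⟨ha, hai, fun j hj haj => ?_⟩
            obtain ⟨k, hk⟩ := hf2 j hj
            exact (mem_iInter.1 hint k) (hmono hk haj)
        have hGδ : IsGδ (Q i) := by
          rw [hQi]
          refine (hA.inter isClosed_closure.isGδ).inter (IsGδ.iInter fun k => ?_)
          exact (isClosed_closure (s := S (f k))).isOpen_compl.isGδ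
        have hdense : Q i ⊆ closure (S i) := fun a ha => ((hQ i a).1 ha).2.1
        exact IH (Q i) (S i) hGδ hdense hScard
      · refine ⟨∅, by simp, by simp [Set.PairwiseDisjoint, Set.Pairwise], ?_, by simp⟩
        rw [sUnion_empty]
        symm
        rw [eq_empty_iff_forall_notMem]
        intro a ha
        obtain ⟨ha', hai, hmin⟩ := (hQ i a).1 ha
        rcases eq_empty_or_nonempty (S i) with hSe | hSne
        · rw [hCl] at hai
          simp only [hSe, closure_empty, mem_empty_iff_false] at hai
        · have hai' := hai
          rw [hCl] at hai'
          rw [mem_closure_iff_seq_limit] at hai'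
          obtain ⟨u, hu, hul⟩ := hai'
          have hud : ∀ k, ∃ d : ↥D, φ d < i ∧ (d : X) = u k := fun k => by
            obtain ⟨d, hd, hde⟩ := hu k
            exact ⟨d, hd, hde⟩
          choose dk hdk1 hdk2 using hud
          push_neg at hcof
          obtain ⟨j₀, hj₀i, hj₀⟩ := hcof (fun k => φ (dk k)) hdk1
          have hclj : a ∈ Cl j₀ := by
            refine mem_closure_iff_seq_limit.2 ⟨u, fun k => ?_, hul⟩
            exact ⟨dk k, hj₀ k, hdk2 k⟩
          exact hmin _ hj₀i hclj
    choose P hP1 hP2 hP3 hP4 using key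
    refine ⟨⋃ i, P i, ?_, ?_, ?_, ?_⟩
    · intro Y hY
      obtain ⟨i, hi⟩ := mem_iUnion.1 hY
      exact hP1 i Y hi
    · rintro Y₁ hY₁ Y₂ hY₂ hne
      obtain ⟨i₁, hi₁⟩ := mem_iUnion.1 hY₁
      obtain ⟨i₂, hi₂⟩ := mem_iUnion.1 hY₂
      rcases eq_or_ne i₁ i₂ with rfl | hii
      · exact hP2 i₁ hi₁ hi₂ hne
      · have hs₁ : Y₁ ⊆ Q i₁ := (hP3 i₁) ▸ subset_sUnion_of_mem hi₁
        have hs₂ : Y₂ ⊆ Q i₂ := (hP3 i₂) ▸ subset_sUnion_of_mem hi₂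
        exact ((hQdisj i₁ i₂ hii).mono hs₁ hs₂)
    · rw [sUnion_iUnion, ← hQU]
      exact iUnion_congr hP3
    · refine le_trans (mk_iUnion_le _) ?_
      have hsup : ⨆ i, #↥(P i) ≤ aleph (n : Ordinal) := ciSup_le' hP4
      refine le_trans (mul_le_mul' hIcard.le hsup) ?_
      rw [Cardinal.mul_eq_max (by rw [hκ]; exact aleph0_le_aleph _) (aleph0_le_aleph _)]
      refine max_le le_rfl ?_
      rw [hκ]
      exact aleph_le_aleph.2 (by exact_mod_cast Nat.le_succ n)

theorem continuum_lt_aleph_omega0 (hc : Cardinal.continuum.{0} < Cardinal.aleph (Ordinal.omega0 + 1)) :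
    Cardinal.continuum.{0} < Cardinal.aleph Ordinal.omega0 := by
  have hle : continuum.{0} ≤ aleph Ordinal.omega0 := by
    have he : aleph (Ordinal.omega0 + 1) = Order.succ (aleph Ordinal.omega0) := by
      rw [Ordinal.add_one_eq_succ, aleph_succ]
    rw [he] at hc
    exact Order.lt_succ_iff.1 hc
  rcases lt_or_eq_of_le hle with h | h
  · exact h
  exfalso
  have hsum : aleph Ordinal.omega0 ≤ sum (fun m : ℕ => aleph m) := by
    rw [aleph_limit Ordinal.isSuccLimit_omega0]
    refine ciSup_le' ?_
    rintro ⟨a, ha⟩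
    obtain ⟨m, rfl⟩ := Ordinal.lt_omega0.1 ha
    exact le_sum (fun m : ℕ => aleph m) m
  have hcpow : (continuum.{0}) ^ (ℵ₀ : Cardinal) = continuum := by
    rw [← aleph0_power_aleph0, ← power_mul, aleph0_mul_aleph0]
  have hprod : Cardinal.prod (fun m : ℕ => aleph ((m + 1 : ℕ))) ≤ continuum := by
    calc Cardinal.prod (fun m : ℕ => aleph ((m + 1 : ℕ)))
        ≤ Cardinal.prod (fun _ : ℕ => continuum.{0}) := by
          refine prod_le_prod _ _ fun m => ?_
          rw [h]
          exact aleph_le_aleph.2 (le_of_lt (Ordinal.nat_lt_omega0 (m + 1)))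
      _ = continuum := by
          rw [prod_const, lift_id, lift_id, mk_nat, hcpow]
  have hk : sum (fun m : ℕ => aleph m) < Cardinal.prod (fun m : ℕ => aleph ((m + 1 : ℕ))) := by
    refine sum_lt_prod _ _ fun m => ?_
    exact aleph_lt_aleph.2 (by exact_mod_cast Nat.lt_succ_self m)
  have hfinal : aleph Ordinal.omega0 < continuum := hsum.trans_lt (hk.trans_le hprod)
  rw [h] at hfinal
  exact lt_irrefl _ hfinal


/-- The least cardinality of a covering of `X` by Polish subspaces. -/
noncomputable def covPolish (X : Type u) [TopologicalSpace X] : Cardinal.{u} :=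
  sInf { c | ∃ F : Set (Set X), (∀ Y ∈ F, PolishSpace Y) ∧ ⋃₀ F = Set.univ ∧ #F = c }

/-- The least cardinality of a partition of `X` into Polish subspaces. -/
noncomputable def parPolish (X : Type u) [TopologicalSpace X] : Cardinal.{u} :=
  sInf { c | ∃ P : Set (Set X), (∀ Y ∈ P, PolishSpace Y) ∧ P.PairwiseDisjoint id ∧
    ⋃₀ P = Set.univ ∧ #P = c }


/-- If `𝔠 < ℵ_{ω+1}`, then `cov(X) = par(X)` for every completely metrizable
space `X`. -/
theorem cov_eq_par_of_continuum_lt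
    (hc : Cardinal.continuum.{0} < Cardinal.aleph (Ordinal.omega0 + 1)) :
    ∀ (X : Type) (_ : MetricSpace X) (_ : CompleteSpace X),
      covPolish X = parPolish X := by
  have hcω : continuum.{0} < aleph Ordinal.omega0 := continuum_lt_aleph_omega0 hc
  intro X _inst _cinst
  classical
  rw [covPolish, parPolish]
  set parSet := { c | ∃ P : Set (Set X), (∀ Y ∈ P, PolishSpace Y) ∧ P.PairwiseDisjoint id ∧
    ⋃₀ P = Set.univ ∧ #P = c } with hparSet
  set covSet := { c | ∃ F : Set (Set X), (∀ Y ∈ F, PolishSpace Y) ∧ ⋃₀ F = Set.univ ∧ #F = c }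
    with hcovSet
  have hsingPolish : ∀ x : X, PolishSpace ({x} : Set X) := fun x =>
    polish_of_gdelta_sep isClosed_singleton.isGδ (Set.finite_singleton x).isSeparable
  have hsing_pd : (Set.range fun x : X => ({x} : Set X)).PairwiseDisjoint id := by
    rintro Y₁ hY₁ Y₂ hY₂ hne
    obtain ⟨x₁, rfl⟩ := hY₁
    obtain ⟨x₂, rfl⟩ := hY₂
    exact Set.disjoint_singleton.2 fun he => hne (by rw [he])
  have hsing_un : ⋃₀ (Set.range fun x : X => ({x} : Set X)) = Set.univ := by
    rw [Set.sUnion_range]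
    exact Set.iUnion_of_singleton X
  have hpar_ne : parSet.Nonempty := by
    refine ⟨#↥(Set.range fun x : X => ({x} : Set X)),
      Set.range fun x : X => ({x} : Set X), ?_, hsing_pd, hsing_un, rfl⟩
    rintro Y ⟨x, rfl⟩
    exact hsingPolish x
  have hsub : parSet ⊆ covSet := by
    rintro c ⟨P, h1, h2, h3, h4⟩
    exact ⟨P, h1, h3, h4⟩
  have hcov_ne : covSet.Nonempty := hpar_ne.mono hsub
  have hdir1 : sInf covSet ≤ sInf parSet := csInf_le_csInf (OrderBot.bddBelow _) hpar_ne hsub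
  obtain ⟨F, hFpol, hFcov, hFc⟩ := csInf_mem hcov_ne
  suffices hex : ∃ P : Set (Set X), (∀ Y ∈ P, PolishSpace Y) ∧ P.PairwiseDisjoint id ∧
      ⋃₀ P = Set.univ ∧ #P ≤ sInf covSet by
    obtain ⟨P, h1, h2, h3, h4⟩ := hex
    have hle2 : sInf parSet ≤ #↥P := csInf_le (OrderBot.bddBelow _) ⟨P, h1, h2, h3, rfl⟩
    exact le_antisymm hdir1 (hle2.trans h4)
  by_cases hXne : Nonempty X
  case neg =>
    refine ⟨∅, by simp, by simp [Set.PairwiseDisjoint, Set.Pairwise], ?_, by simp⟩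
    rw [sUnion_empty]
    exact (Set.univ_eq_empty_iff.2 (not_nonempty_iff.1 hXne)).symm
  case pos =>
  haveI := hXne
  have hFne : Nonempty ↥F := by
    obtain ⟨x⟩ := hXne
    have hx : x ∈ ⋃₀ F := by rw [hFcov]; trivial
    obtain ⟨Y, hY, -⟩ := hx
    exact ⟨⟨Y, hY⟩⟩
  have hc1 : 1 ≤ sInf covSet := by
    rw [← hFc]
    exact Cardinal.one_le_iff_ne_zero.2 (mk_ne_zero_iff.2 hFne)
  have hsep : ∀ Y : ↥F, TopologicalSpace.IsSeparable (Y : Set X) := fun Y =>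
    isSeparable_of_polish (hFpol Y Y.2)
  have hDex : ∀ Y : ↥F, ∃ d : Set X, d.Countable ∧ (Y : Set X) ⊆ closure d := fun Y => hsep Y
  choose d hd1 hd2 using hDex
  set D := ⋃ Y : ↥F, d Y with hDdef
  have hDdense : (Set.univ : Set X) ⊆ closure D := by
    intro x _
    have hx : x ∈ ⋃₀ F := by rw [hFcov]; trivial
    obtain ⟨Y, hY, hxY⟩ := hx
    exact closure_mono (subset_iUnion (fun Y : ↥F => d Y) ⟨Y, hY⟩) (hd2 ⟨Y, hY⟩ hxY)
  have hDcard : #↥D ≤ sInf covSet * ℵ₀ := by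
    refine (mk_iUnion_le _).trans (mul_le_mul' (le_of_eq hFc) (ciSup_le' fun Y => ?_))
    haveI := (hd1 Y).to_subtype
    exact mk_le_aleph0
  by_cases hfin : sInf covSet < ℵ₀
  · have hDc : #↥D ≤ ℵ₀ := by
      refine hDcard.trans ?_
      calc sInf covSet * ℵ₀ ≤ ℵ₀ * ℵ₀ := mul_le_mul' hfin.le le_rfl
        _ = ℵ₀ := aleph0_mul_aleph0
    have hDct : D.Countable := by
      rw [← Set.countable_coe_iff, ← Cardinal.mk_le_aleph0_iff]
      exact hDc
    have hXpol : PolishSpace (Set.univ : Set X) :=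
      polish_of_gdelta_sep IsGδ.univ ⟨D, hDct, fun x hx => hDdense hx⟩
    refine ⟨{Set.univ}, ?_, by simp [Set.PairwiseDisjoint, Set.Pairwise], sUnion_singleton _, ?_⟩
    · intro Y hY
      rw [mem_singleton_iff] at hY
      subst hY
      exact hXpol
    · rw [mk_singleton]
      exact hc1
  · push_neg at hfin
    by_cases hbig : sInf covSet ≤ continuum
    · obtain ⟨o, ho⟩ : ∃ o, sInf covSet = aleph o :=
          let ⟨o, h⟩ := mem_range_aleph_iff.2 hfin; ⟨o, h.symm⟩
      have hoω : o < Ordinal.omega0 := aleph_lt_aleph.1 ((ho ▸ hbig).trans_lt hcω)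
      obtain ⟨m, rfl⟩ := Ordinal.lt_omega0.1 hoω
      have hDcard' : #↥D ≤ aleph m := by
        refine hDcard.trans ?_
        rw [ho, Cardinal.mul_eq_max (aleph0_le_aleph _) le_rfl]
        exact max_le le_rfl (aleph0_le_aleph _)
      obtain ⟨P, h1, h2, h3, h4⟩ := main_partition m Set.univ D IsGδ.univ hDdense hDcard'
      exact ⟨P, h1, h2, h3, by rw [ho]; exact h4⟩
    · push_neg at hbig
      have hmkX : #X ≤ sInf covSet := by
        have h1 : #X = #↥(⋃₀ F) := by rw [hFcov, mk_univ]
        have h3 : ⨆ Y : ↥F, #↥((Y : Set X)) ≤ continuum :=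
          ciSup_le' fun Y => mk_le_continuum_of_isSeparable (hsep Y)
        calc #X = #↥(⋃₀ F) := h1
          _ ≤ #↥F * ⨆ Y : ↥F, #↥((Y : Set X)) := Cardinal.mk_sUnion_le F
          _ ≤ sInf covSet * continuum := mul_le_mul' (le_of_eq hFc) h3
          _ = sInf covSet := by
              rw [Cardinal.mul_eq_max (aleph0_le_continuum.trans hbig.le) aleph0_le_continuum]
              exact max_eq_left hbig.le
      refine ⟨Set.range fun x : X => ({x} : Set X), ?_, hsing_pd, hsing_un, ?_⟩
      · rintro Y ⟨x, rfl⟩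
        exact hsingPolish x
      · exact mk_range_le.trans hmkX
end

section
/- Let X be a completely metrizable space of weight κ < ℵ_ω with κ uncountable. If there is a continuous bijection from X onto [0,1], then [0,1] can be partitioned into κ Borel sets. -/
open Cardinal Set TopologicalSpace

lemma tweight_le_of_dense {X : Type} [MetricSpace X] {D : Set X} (hD : Dense D) :
    tweight X ≤ #D * ℵ₀ := by
  classical
  set B : Set (Set X) :=
    (fun p : X × ℕ => Metric.ball p.1 (1 / (p.2 + 1))) '' (D ×ˢ (univ : Set ℕ)) with hBdef
  have hbasis : IsTopologicalBasis B := by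
    apply isTopologicalBasis_of_isOpen_of_nhds
    · rintro u ⟨⟨d, k⟩, -, rfl⟩; exact Metric.isOpen_ball
    · intro a u ha hu
      obtain ⟨ε, εpos, hε⟩ := Metric.isOpen_iff.1 hu a ha
      obtain ⟨k, hk⟩ := exists_nat_one_div_lt (show (0:ℝ) < ε / 2 by linarith)
      have hk1 : (0:ℝ) < 1 / (k + 1) := by positivity
      obtain ⟨d, hdD, hd⟩ := hD.exists_dist_lt a hk1
      refine ⟨Metric.ball d (1 / (k + 1)), ⟨⟨d, k⟩, ⟨hdD, trivial⟩, rfl⟩, ?_, ?_⟩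
      · rw [Metric.mem_ball]; exact hd
      · intro y hy
        apply hε
        rw [Metric.mem_ball] at hy ⊢
        have : dist y a ≤ dist y d + dist a d := by
          have := dist_triangle y d a
          rw [dist_comm d a] at this; linarith [this]
        have h2 : (1:ℝ) / (k + 1) < ε / 2 := hk
        linarith
  have hcard : #B ≤ #D * ℵ₀ := by
    refine le_trans mk_image_le ?_
    rw [show #(↥(D ×ˢ (univ : Set ℕ))) = #(↥D × ↥(univ : Set ℕ)) from
      Cardinal.mk_congr (Equiv.Set.prod _ _)]
    rw [Cardinal.mk_prod, Cardinal.lift_id, Cardinal.lift_id]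
    apply mul_le_mul' le_rfl
    rw [Cardinal.mk_univ, Cardinal.mk_nat]
  exact le_trans (csInf_le' ⟨B, hbasis, rfl⟩) hcard

lemma exists_dense_of_tweight {X : Type} [TopologicalSpace X] :
    ∃ D : Set X, Dense D ∧ #D ≤ tweight X := by
  classical
  have hne : { c | ∃ B : Set (Set X), IsTopologicalBasis B ∧ #B = c }.Nonempty :=
    ⟨_, { s : Set X | IsOpen s }, isTopologicalBasis_opens, rfl⟩
  obtain ⟨B, hB, hBc⟩ := csInf_mem hne
  have hpt : ∀ b : {b : Set X // b ∈ B ∧ b.Nonempty}, ∃ x, x ∈ b.1 := fun b => b.2.2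
  choose pt hpt using hpt
  refine ⟨range pt, ?_, ?_⟩
  · rw [dense_iff_inter_open]
    rintro U hU ⟨x, hx⟩
    obtain ⟨b, hbB, hxb, hbU⟩ := hB.exists_subset_of_mem_open hx hU
    exact ⟨pt ⟨b, hbB, ⟨x, hxb⟩⟩, hbU (hpt ⟨b, hbB, ⟨x, hxb⟩⟩), mem_range_self _⟩
  · calc #(range pt) ≤ #{b : Set X // b ∈ B ∧ b.Nonempty} := mk_range_le
      _ ≤ #B := by
          apply Cardinal.mk_le_mk_of_subset (s := {b : Set X | b ∈ B ∧ b.Nonempty})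
          intro b hb; exact hb.1
      _ = tweight X := hBc

/-- Main partition lemma: a Gδ subset of a metric space which is contained in the closure
of a set of size `≤ ℵ_n` can be partitioned into at most `ℵ_n` separable Gδ pieces. -/
lemma partition_lemma : ∀ (n : ℕ) (X : Type) [MetricSpace X] (T : Set X), IsGδ T →
    (∃ S : Set X, T ⊆ closure S ∧ #S ≤ Cardinal.aleph n) →
    ∃ P : Set (Set X), P.PairwiseDisjoint id ∧ ⋃₀ P = T ∧ #P ≤ Cardinal.aleph n ∧
      ∀ p ∈ P, IsGδ p ∧ IsSeparable p := by
  intro n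
  induction n with
  | zero =>
    intro X _ T hT hS
    obtain ⟨S, hTS, hScard⟩ := hS
    have hScnt : S.Countable := by
      rw [Nat.cast_zero, aleph_zero] at hScard
      exact Set.countable_coe_iff.1 (Cardinal.mk_le_aleph0_iff.1 hScard)
    refine ⟨{T}, pairwiseDisjoint_singleton _ _, sUnion_singleton _, ?_, ?_⟩
    · rw [Cardinal.mk_singleton, Nat.cast_zero, aleph_zero]
      exact Cardinal.one_lt_aleph0.le
    · rintro p hp
      rw [mem_singleton_iff] at hp
      subst hp
      exact ⟨hT, ⟨S, hScnt, hTS⟩⟩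
  | succ n ih =>
    intro X _ T hT hS
    obtain ⟨S, hTS, hScard⟩ := hS
    rcases eq_empty_or_nonempty T with hTe | hTne
    · exact ⟨∅, pairwiseDisjoint_empty, by simp [hTe], by simp, by simp⟩
    have hSne : S.Nonempty := by
      rcases hTne with ⟨t, ht⟩
      rcases eq_empty_or_nonempty S with h | h
      · exfalso; have := hTS ht; rw [h, closure_empty] at this; exact this
      · exact h
    set κ' := Cardinal.aleph (n + 1 : ℕ) with hκ'def
    have hκ'succ : κ' = Cardinal.aleph (Order.succ (n : Ordinal)) := by
      rw [hκ'def, show ((n + 1 : ℕ) : Ordinal) = Order.succ (n : Ordinal) by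
        rw [Nat.cast_succ, Ordinal.add_one_eq_succ]]
    have hκ'reg : κ'.IsRegular := by
      rw [hκ'succ]; exact Cardinal.isRegular_aleph_succ _
    have haleph0 : ℵ₀ ≤ κ' := hκ'reg.aleph0_le
    set o := κ'.ord with hodef
    have hocard : o.card = κ' := Cardinal.card_ord _
    have hcof : o.cof = κ' := hκ'reg.cof_eq
    have holim : Order.IsSuccLimit o := Cardinal.isSuccLimit_ord haleph0
    have hopos : (0 : Ordinal) < o := holim.pos
    -- enumeration of S
    obtain ⟨x, hxS, hSx⟩ : ∃ x : Ordinal → X, (∀ β, x β ∈ S) ∧ S ⊆ x '' (Iio o) := by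
      have hcard : #(↥S) ≤ #o.ToType := by
        rw [Cardinal.mk_toType, hocard]; exact hScard
      obtain ⟨emb⟩ := Cardinal.le_def _ _ |>.1 hcard
      haveI : Nonempty ↥S := hSne.to_subtype
      set σ : o.ToType → ↥S := Function.invFun emb with hσdef
      have hσ : Function.Surjective σ := Function.invFun_surjective emb.injective
      set e := Ordinal.ToType.mk (o := o) with hedef
      refine ⟨fun β => if h : β < o then (σ (e ⟨β, h⟩) : X) else (σ (e ⟨0, hopos⟩) : X),
        fun β => ?_, fun s hs => ?_⟩
      · dsimp only; split <;> exact Subtype.mem _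
      · obtain ⟨i, hi⟩ := hσ ⟨s, hs⟩
        refine ⟨(e.symm i : Iio o), (e.symm i).2, ?_⟩
        dsimp only
        rw [dif_pos (show ((e.symm i : Iio o) : Ordinal) < o from (e.symm i).2)]
        have h2 : (⟨((e.symm i : Iio o) : Ordinal),
            (show ((e.symm i : Iio o) : Ordinal) < o from (e.symm i).2)⟩ : Iio o) = e.symm i :=
          Subtype.ext rfl
        rw [h2, OrderIso.apply_symm_apply, hi]
    set C : Ordinal → Set X := fun α => closure (x '' Iio α) with hC
    have hCmono : ∀ {a b : Ordinal}, a ≤ b → C a ⊆ C b := fun h =>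
      closure_mono (image_mono (Iio_subset_Iio h))
    have hCclosed : ∀ a, IsClosed (C a) := fun a => isClosed_closure
    have happrox : ∀ {t : X} {α : Ordinal}, t ∈ C α →
        ∃ β : ℕ → Ordinal, (∀ k, β k < α) ∧ ∀ k : ℕ, dist t (x (β k)) < 1 / (k + 1) := by
      intro t α ht
      have h : ∀ k : ℕ, ∃ β, β < α ∧ dist t (x β) < 1 / (k + 1) := by
        intro k
        have hk : (0:ℝ) < 1 / (k + 1) := by positivity
        obtain ⟨y, hy, hdy⟩ := Metric.mem_closure_iff.1 ht _ hk
        obtain ⟨β, hβ, rfl⟩ := hy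
        exact ⟨β, hβ, hdy⟩
      choose β h1 h2 using h
      exact ⟨β, h1, h2⟩
    have hlim : ∀ {t : X} (β : ℕ → Ordinal) (γ : Ordinal), (∀ k, β k < γ) →
        (∀ k : ℕ, dist t (x (β k)) < 1 / (k + 1)) → t ∈ C γ := by
      intro t β γ h1 h2
      apply Metric.mem_closure_iff.2
      intro ε εpos
      obtain ⟨k, hk⟩ := exists_nat_one_div_lt εpos
      exact ⟨x (β k), mem_image_of_mem _ (h1 k), (h2 k).trans hk⟩
    have hcover : ∀ t ∈ T, ∃ α < o, t ∈ C α := by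
      intro t ht
      have htc : t ∈ C o := closure_mono hSx (hTS ht)
      obtain ⟨β, h1, h2⟩ := happrox htc
      have h1κ : ℵ₀ < κ' := by
        rw [hκ'succ]
        calc ℵ₀ = Cardinal.aleph 0 := Cardinal.aleph_zero.symm
          _ < Cardinal.aleph (Order.succ (n : Ordinal)) :=
            Cardinal.aleph_lt_aleph.2 (Order.lt_succ_of_le (zero_le (a := (n : Ordinal))))
      have hγo : (⨆ k, β k + 1) < o := by
        apply Ordinal.iSup_lt_ord
        · rw [Cardinal.mk_nat, hcof]; exact h1κ
        · intro k
          rw [Ordinal.add_one_eq_succ]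
          exact holim.succ_lt (h1 k)
      refine ⟨_, hγo, hlim β _ (fun k => ?_) h2⟩
      calc β k < β k + 1 := by rw [Ordinal.add_one_eq_succ]; exact Order.lt_succ _
        _ ≤ ⨆ k, β k + 1 := Ordinal.le_iSup _ k
    set E : Ordinal → Set X := fun α => (T ∩ C α) \ ⋃ β < α, C β with hE
    have hEsub : ∀ α, E α ⊆ T := fun α t ht => ht.1.1
    have hEC : ∀ α, E α ⊆ C α := fun α t ht => ht.1.2
    have hEGδ : ∀ α, IsGδ (E α) := by
      intro α
      rcases eq_empty_or_nonempty (E α) with h | ⟨t, ht⟩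
      · rw [h]; exact IsGδ.empty
      obtain ⟨β, h1, h2⟩ := happrox (hEC α ht)
      have hU : (⋃ γ < α, C γ) = ⋃ k, C (β k) := by
        apply Subset.antisymm
        · refine iUnion₂_subset fun γ hγ => ?_
          by_cases hcase : ∃ k, γ ≤ β k
          · obtain ⟨k, hk⟩ := hcase
            exact (hCmono hk).trans (subset_iUnion (fun k => C (β k)) k)
          · push_neg at hcase
            exfalso
            exact ht.2 (mem_biUnion hγ (hlim β γ hcase h2))
        · exact iUnion_subset fun k y hy => mem_biUnion (h1 k) hy
      have hEeq : E α = (T ∩ C α) ∩ ⋂ k, (C (β k))ᶜ := by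
        rw [show E α = (T ∩ C α) \ ⋃ γ < α, C γ from rfl, hU, diff_eq, compl_iUnion]
      rw [hEeq]
      exact (hT.inter (hCclosed α).isGδ).inter
        (IsGδ.iInter fun k => (hCclosed (β k)).isOpen_compl.isGδ)
    have hEdisj : ∀ {a b : Ordinal}, a < b → Disjoint (E a) (E b) := by
      intro a b hab
      rw [disjoint_left]
      intro u hu hub
      exact hub.2 (mem_biUnion hab (hEC a hu))
    have key : ∀ α, α < o → ∃ P : Set (Set X), P.PairwiseDisjoint id ∧ ⋃₀ P = E α ∧
        #P ≤ Cardinal.aleph n ∧ ∀ p ∈ P, IsGδ p ∧ IsSeparable p := by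
      intro α hα
      apply ih X (E α) (hEGδ α)
      refine ⟨x '' Iio α, hEC α, ?_⟩
      have h1 : #(x '' Iio α) ≤ α.card := by
        have h := Cardinal.mk_image_le_lift (f := x) (s := Iio α)
        rw [Ordinal.mk_Iio_ordinal] at h
        exact Cardinal.lift_le.1 (by simpa using h)
      have h2 : α.card < κ' := by
        rw [hodef] at hα
        exact Cardinal.lt_ord.1 hα
      have h3 : α.card ≤ Cardinal.aleph n := by
        rw [hκ'succ, Cardinal.aleph_succ] at h2
        exact Order.lt_succ_iff.1 h2
      exact h1.trans h3
    choose Pfun hP1 hP2 hP3 hP4 using key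
    set e := Ordinal.ToType.mk (o := o) with hedef
    set idx : o.ToType → Ordinal := fun i => ((e.symm i : Iio o) : Ordinal) with hidxdef
    have hidxlt : ∀ i, idx i < o := fun i => (e.symm i).2
    have hidxinj : Function.Injective idx := by
      intro i j h
      have : e.symm i = e.symm j := Subtype.ext h
      exact e.symm.injective this
    have hidxsurj : ∀ α, α < o → ∃ i, idx i = α := by
      intro α hα
      refine ⟨e ⟨α, hα⟩, ?_⟩
      rw [hidxdef]; dsimp only
      rw [OrderIso.symm_apply_apply]
    set P : Set (Set X) := ⋃ i : o.ToType, Pfun (idx i) (hidxlt i) with hPdef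
    have hmem : ∀ p ∈ P, ∃ i, p ∈ Pfun (idx i) (hidxlt i) := fun p hp => mem_iUnion.1 hp
    have hpsub : ∀ (i) (p), p ∈ Pfun (idx i) (hidxlt i) → p ⊆ E (idx i) := by
      intro i p hp
      rw [← hP2 (idx i) (hidxlt i)]
      exact subset_sUnion_of_mem hp
    refine ⟨P, ?_, ?_, ?_, ?_⟩
    · intro p hp q hq hpq
      obtain ⟨i, hpi⟩ := hmem p hp
      obtain ⟨j, hqj⟩ := hmem q hq
      rcases eq_or_ne i j with rfl | hij
      · exact hP1 _ _ hpi hqj hpq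
      · have hne : idx i ≠ idx j := fun h => hij (hidxinj h)
        rcases hne.lt_or_gt with h | h
        · exact Disjoint.mono (hpsub i p hpi) (hpsub j q hqj) (hEdisj h)
        · exact (Disjoint.mono (hpsub j q hqj) (hpsub i p hpi) (hEdisj h)).symm
    · apply Subset.antisymm
      · refine sUnion_subset fun p hp => ?_
        obtain ⟨i, hpi⟩ := hmem p hp
        exact (hpsub i p hpi).trans (hEsub _)
      · intro t ht
        obtain ⟨α₀, hα₀o, hα₀C, hα₀min⟩ : ∃ α₀, α₀ < o ∧ t ∈ C α₀ ∧ ∀ β < α₀, t ∉ C β := by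
          obtain ⟨α, hαo, hαC⟩ := hcover t ht
          have hne0 : {γ : Ordinal | t ∈ C γ}.Nonempty := ⟨α, hαC⟩
          refine ⟨sInf {γ : Ordinal | t ∈ C γ},
            lt_of_le_of_lt (csInf_le' (show α ∈ {γ : Ordinal | t ∈ C γ} from hαC)) hαo,
            csInf_mem hne0, fun β hβ hmemβ =>
              (not_lt.2 (csInf_le' (show β ∈ {γ : Ordinal | t ∈ C γ} from hmemβ))) hβ⟩
        have htE : t ∈ E α₀ := by
          refine ⟨⟨ht, hα₀C⟩, ?_⟩
          intro hmem'
          rw [mem_iUnion₂] at hmem'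
          obtain ⟨β, hβα, htβ⟩ := hmem'
          exact hα₀min β hβα htβ
        obtain ⟨i, hi⟩ := hidxsurj α₀ hα₀o
        have hEi : E (idx i) = E α₀ := by rw [hi]
        have : t ∈ ⋃₀ Pfun (idx i) (hidxlt i) := by
          rw [hP2 (idx i) (hidxlt i), hEi]; exact htE
        obtain ⟨p, hp, htp⟩ := this
        exact ⟨p, mem_iUnion.2 ⟨i, hp⟩, htp⟩
    · calc #P ≤ #o.ToType * ⨆ i, #(Pfun (idx i) (hidxlt i)) := Cardinal.mk_iUnion_le _
        _ ≤ κ' * Cardinal.aleph n := by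
            apply mul_le_mul'
            · rw [Cardinal.mk_toType, hocard]
            · haveI : Nonempty o.ToType :=
                Ordinal.toType_nonempty_iff_ne_zero.2 holim.pos.ne'
              exact ciSup_le' fun i => hP3 _ _
        _ = κ' := by
            rw [Cardinal.mul_eq_max haleph0 (Cardinal.aleph0_le_aleph _)]
            apply max_eq_left
            rw [hκ'succ, Cardinal.aleph_succ]
            exact (Order.le_succ _)
    · intro p hp
      obtain ⟨i, hpi⟩ := hmem p hp
      exact hP4 _ _ p hpi

/-- Lusin–Suslin: the image of a separable Gδ subset of a complete metric space under a
continuous injective map into `[0,1]` is Borel. -/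
lemma isGδ_preimage {α β : Type*} [TopologicalSpace α] [TopologicalSpace β] {s : Set β}
    (h : IsGδ s) {f : α → β} (hf : Continuous f) : IsGδ (f ⁻¹' s) := by
  obtain ⟨T, hTopen, hTc, rfl⟩ := h
  rw [Set.preimage_sInter]
  exact IsGδ.biInter hTc fun t ht => ((hTopen t ht).preimage hf).isGδ

lemma measurable_image_of_separable_gdelta {X : Type} [MetricSpace X] [CompleteSpace X]
    (f : X → Set.Icc (0 : ℝ) 1) (hf : Continuous f) (hinj : Function.Injective f)
    {p : Set X} (hGδ : IsGδ p) (hsep : IsSeparable p) : MeasurableSet (f '' p) := by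
  set K := closure p with hK
  haveI : CompleteSpace K := isClosed_closure.completeSpace_coe
  haveI : SeparableSpace K := hsep.closure.separableSpace
  haveI : PolishSpace K := inferInstance
  letI : MeasurableSpace K := borel K
  haveI : BorelSpace K := ⟨rfl⟩
  set T' : Set K := Subtype.val ⁻¹' p with hT'
  have hT'meas : MeasurableSet T' :=
    (isGδ_preimage hGδ continuous_subtype_val).measurableSet
  have him : (fun k : K => f (k : X)) '' T' = f '' p := by
    ext y
    constructor
    · rintro ⟨⟨u, hu⟩, hT, rfl⟩; exact ⟨u, hT, rfl⟩
    · rintro ⟨u, hu, rfl⟩; exact ⟨⟨u, subset_closure hu⟩, hu, rfl⟩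
  rw [← him]
  exact hT'meas.image_of_continuousOn_injOn
    (Continuous.continuousOn (hf.comp continuous_subtype_val))
    (fun a _ b _ h => Subtype.ext (hinj h))

/-- If `X` is completely metrizable of uncountable weight `κ < ℵ_ω` and there is a
continuous bijection from `X` onto `[0,1]`, then `[0,1]` can be partitioned into
`κ` Borel sets. -/
theorem borel_partition_of_continuous_bijection (X : Type) [MetricSpace X]
    [CompleteSpace X] (κ : Cardinal) (hκ : ℵ₀ < κ)
    (hκω : κ < Cardinal.aleph Ordinal.omega0) (hw : tweight X = κ)
    (f : X → Set.Icc (0 : ℝ) 1) (hf : Continuous f) (hbij : Function.Bijective f) :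
    ∃ P : Set (Set (Set.Icc (0 : ℝ) 1)), P.PairwiseDisjoint id ∧ ⋃₀ P = Set.univ ∧
      #P = κ ∧ ∀ B ∈ P, MeasurableSet B := by
  classical
  -- κ = ℵ_n for some natural n
  obtain ⟨o', ho'⟩ : ∃ o, κ = Cardinal.aleph o := by
    obtain ⟨o, h⟩ := Cardinal.mem_range_aleph_iff.2 hκ.le; exact ⟨o, h.symm⟩
  have ho'ω : o' < Ordinal.omega0 := by
    rw [← Cardinal.aleph_lt_aleph]
    rw [← ho']; exact hκω
  obtain ⟨n, rfl⟩ := Ordinal.lt_omega0.1 ho'ω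
  -- dense set of size ≤ κ
  obtain ⟨S, hSdense, hScard⟩ := exists_dense_of_tweight (X := X)
  rw [hw] at hScard
  -- partition of X
  obtain ⟨PX, hPX1, hPX2, hPX3, hPX4⟩ := partition_lemma n X univ IsGδ.univ
    ⟨S, by rw [hSdense.closure_eq], by rw [ho'] at hScard; exact hScard⟩
  set P : Set (Set (Set.Icc (0 : ℝ) 1)) := (Set.image f) '' PX with hPdef
  have himginj : Function.Injective (Set.image f) := Set.image_injective.2 hbij.1
  refine ⟨P, ?_, ?_, ?_, ?_⟩
  · rintro p' ⟨p, hp, rfl⟩ q' ⟨q, hq, rfl⟩ hne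
    have hpq : p ≠ q := fun h => hne (by rw [h])
    exact (Set.disjoint_image_iff hbij.1).2 (hPX1 hp hq hpq)
  · rw [hPdef, ← Set.image_sUnion, hPX2, Set.image_univ, Set.range_eq_univ.2 hbij.2]
  · have heq : #P = #PX := Cardinal.mk_image_eq himginj
    have hle : #P ≤ κ := by
      rw [heq, ho']; exact hPX3
    have hge : κ ≤ #P := by
      by_contra hlt
      push_neg at hlt
      -- build a small dense set
      have hsep : ∀ p : ↥PX, ∃ c : Set X, c.Countable ∧ (p : Set X) ⊆ closure c :=
        fun p => (hPX4 p p.2).2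
      choose c hc1 hc2 using hsep
      set D : Set X := ⋃ p : ↥PX, c p with hD
      have hDdense : Dense D := by
        intro t
        have ht : t ∈ ⋃₀ PX := by rw [hPX2]; trivial
        obtain ⟨p, hp, htp⟩ := ht
        exact closure_mono (subset_iUnion (fun p : ↥PX => c p) ⟨p, hp⟩) (hc2 ⟨p, hp⟩ htp)
      set m : Cardinal := max (#PX) ℵ₀ with hm
      have hmκ : m < κ := by
        rw [hm, max_lt_iff]
        exact ⟨heq ▸ hlt, hκ⟩
      have haleph0m : ℵ₀ ≤ m := le_max_right _ _
      have hDcard : #D ≤ m := by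
        calc #D ≤ Cardinal.sum (fun p : ↥PX => #(c p)) := Cardinal.mk_iUnion_le_sum_mk
          _ ≤ Cardinal.sum (fun _ : ↥PX => ℵ₀) := Cardinal.sum_le_sum _ _
              (fun p => Cardinal.mk_le_aleph0_iff.2 (Set.countable_coe_iff.2 (hc1 p)))
          _ = #(↥PX) * ℵ₀ := Cardinal.sum_const' _ _
          _ ≤ m * m := mul_le_mul' (le_max_left _ _) (le_max_right _ _)
          _ = m := Cardinal.mul_eq_self haleph0m
      have : tweight X ≤ m := by
        calc tweight X ≤ #D * ℵ₀ := tweight_le_of_dense hDdense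
          _ ≤ m * m := mul_le_mul' hDcard haleph0m
          _ = m := Cardinal.mul_eq_self haleph0m
      rw [hw] at this
      exact absurd (this.trans_lt hmκ) (lt_irrefl κ)
    exact le_antisymm hle hge
  · rintro B ⟨p, hp, rfl⟩
    exact measurable_image_of_separable_gdelta f hf hbij.1 (hPX4 p hp).1 (hPX4 p hp).2
end

section
/- If there is a skinny partition of (ω_ω)^ω into Polish subspaces, then there is a sparse cofinal family in ([ω_ω]^{ℵ₀}, ⊆). -/
open Cardinal Set

/-- The set of all coordinate values taken by elements of `Z`. -/
def valsSet {A : Type} (Z : Set (ℕ → A)) : Set A := {a | ∃ x ∈ Z, ∃ n : ℕ, x n = a}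

/-- The set of sequences all of whose values lie in `t`, as a topological space,
is Polish whenever `t` is countable (and `A` is discrete). -/
theorem polish_pi_subset {A : Type} [TopologicalSpace A] [DiscreteTopology A]
    (t : Set A) (ht : t.Countable) :
    PolishSpace ({x : ℕ → A | ∀ n, x n ∈ t} : Set (ℕ → A)) := by
  haveI : Countable t := ht.to_subtype
  haveI : PolishSpace t := {}
  let e : ({x : ℕ → A | ∀ n, x n ∈ t} : Set (ℕ → A)) ≃ₜ (ℕ → t) :=
    { toFun := fun y n => ⟨y.1 n, y.2 n⟩
      invFun := fun f => ⟨fun n => (f n : A), fun n => (f n).2⟩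
      left_inv := fun y => rfl
      right_inv := fun f => rfl
      continuous_toFun := continuous_pi fun n =>
        Continuous.subtype_mk ((continuous_apply n).comp continuous_subtype_val) _
      continuous_invFun := Continuous.subtype_mk
        (continuous_pi fun n => continuous_subtype_val.comp (continuous_apply n)) _ }
  exact e.isClosedEmbedding.polishSpace

/-- If `Z` is a Polish subspace of a power of a discrete space, its set of values
is countable. -/
theorem countable_valsSet {A : Type} [TopologicalSpace A] [DiscreteTopology A]
    (Z : Set (ℕ → A)) (hZ : PolishSpace Z) : (valsSet Z).Countable := by
  haveI := hZ
  obtain ⟨D, Dcount, Ddense⟩ := TopologicalSpace.exists_countable_dense Z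
  have hsub : valsSet Z ⊆ ⋃ d ∈ D, Set.range (fun n : ℕ => (d : ℕ → A) n) := by
    rintro a ⟨x, hx, n, rfl⟩
    have hopen : IsOpen ((fun y : Z => (y : ℕ → A) n) ⁻¹' {x n}) :=
      (isOpen_discrete _).preimage ((continuous_apply n).comp continuous_subtype_val)
    have hne : ((fun y : Z => (y : ℕ → A) n) ⁻¹' {x n}).Nonempty :=
      ⟨⟨x, hx⟩, rfl⟩
    obtain ⟨d, hdD, hd⟩ := Ddense.exists_mem_open hopen hne
    exact Set.mem_biUnion hdD ⟨n, hd⟩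
  exact Set.Countable.mono hsub
    (Dcount.biUnion fun d _ => Set.countable_range _)

/-- If there is a skinny partition of `(ω_ω)^ω` into Polish subspaces, then there
is a sparse cofinal family in `([ω_ω]^{ℵ₀}, ⊆)`. -/
theorem sparse_cofinal_of_skinny_partition
    (A : Type) [TopologicalSpace A] [DiscreteTopology A]
    (hA : #A = Cardinal.aleph Ordinal.omega0)
    (P : Set (Set (ℕ → A))) (hdisj : P.PairwiseDisjoint id)
    (hcover : ⋃₀ P = Set.univ) (hPolish : ∀ Y ∈ P, PolishSpace Y)
    (hskinny : ∀ Y : Set (ℕ → A), PolishSpace Y →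
      {Z ∈ P | (Z ∩ Y).Nonempty}.Countable) :
    ∃ F : Set (Set A), (∀ s ∈ F, s.Countable) ∧
      (∀ t : Set A, t.Countable → ∃ s ∈ F, t ⊆ s) ∧
      (∀ t : Set A, t.Countable → {s ∈ F | s ⊆ t}.Countable) := by
  have hAne : Nonempty A := by
    rw [← Cardinal.mk_ne_zero_iff, hA]
    exact (Cardinal.aleph_pos _).ne'
  refine ⟨valsSet '' P, ?_, ?_, ?_⟩
  · rintro s ⟨Z, hZ, rfl⟩
    exact countable_valsSet Z (hPolish Z hZ)
  · -- cofinal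
    intro t htc
    rcases t.eq_empty_or_nonempty with rfl | htne
    · obtain ⟨a⟩ := hAne
      have : (fun _ : ℕ => a) ∈ ⋃₀ P := by rw [hcover]; trivial
      obtain ⟨Z, hZP, hxZ⟩ := this
      exact ⟨valsSet Z, ⟨Z, hZP, rfl⟩, by simp⟩
    · obtain ⟨f, hf⟩ := Set.Countable.exists_eq_range htc htne
      have : f ∈ ⋃₀ P := by rw [hcover]; trivial
      obtain ⟨Z, hZP, hfZ⟩ := this
      refine ⟨valsSet Z, ⟨Z, hZP, rfl⟩, ?_⟩
      rw [hf]
      rintro a ⟨n, rfl⟩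
      exact ⟨f, hfZ, n, rfl⟩
  · -- sparse
    intro t htc
    set Y : Set (ℕ → A) := {x | ∀ n, x n ∈ t} with hY
    have hYP : PolishSpace Y := polish_pi_subset t htc
    have hcnt := hskinny Y hYP
    have hsub : {s ∈ valsSet '' P | s ⊆ t} ⊆
        insert ∅ (valsSet '' {Z ∈ P | (Z ∩ Y).Nonempty}) := by
      rintro s ⟨⟨Z, hZP, rfl⟩, hst⟩
      rcases Z.eq_empty_or_nonempty with rfl | ⟨x, hxZ⟩
      · left
        simp only [valsSet]
        ext a
        simp
      · right
        refine ⟨Z, ⟨hZP, ⟨x, hxZ, ?_⟩⟩, rfl⟩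
        exact fun n => hst ⟨x, hxZ, n, rfl⟩
    exact Set.Countable.mono hsub ((hcnt.image _).insert ∅)
end

section
/- Let κ be an uncountable cardinal with cofinality ω, and let X be a complete metric space containing a closed subset that is not locally <κ-like. Then X contains a closed subspace homeomorphic to κ^ω (κ discrete, product topology). -/
open Cardinal Set TopologicalSpace

/-- A space is locally `<κ`-like if every nonempty open subset contains a nonempty
open subset of weight `< κ`. -/
def LocallyLtLike (Z : Type*) [TopologicalSpace Z] (κ : Cardinal) : Prop :=
  ∀ U : Set Z, IsOpen U → U.Nonempty →
    ∃ V : Set Z, IsOpen V ∧ V.Nonempty ∧ V ⊆ U ∧ tweight V < κ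

open Metric Bornology Topology


lemma my_succ_lt (κ : Cardinal.{0}) (hκ : ℵ₀ < κ) (hcf : κ.ord.cof = ℵ₀) :
    ∀ c < κ, Order.succ c < κ := by
  intro c hc
  rcases lt_or_ge c ℵ₀ with h | h
  · exact lt_of_le_of_lt (Order.succ_le_of_lt h) hκ
  · by_contra hcon
    push_neg at hcon
    have hceq : κ = Order.succ c := le_antisymm hcon (Order.succ_le_of_lt hc)
    have hreg := Cardinal.isRegular_succ h
    have : (Order.succ c).ord.cof = ℵ₀ := by rw [← hceq, hcf]
    have h2 := hreg.2
    rw [this] at h2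
    exact absurd (hceq ▸ hκ) (not_lt.mpr h2)

lemma my_cof_seq (κ : Cardinal.{0}) (hκ : ℵ₀ < κ) (hcf : κ.ord.cof = ℵ₀) :
    ∃ μ : ℕ → Cardinal.{0}, (∀ k, ℵ₀ ≤ μ k) ∧ (∀ k, μ k < κ) ∧
      (∀ c < κ, ∃ k, c ≤ μ k) ∧ Cardinal.sum μ = κ := by
  obtain ⟨ι, f, hlsub, hι⟩ := Ordinal.exists_lsub_cof κ.ord
  rw [hcf] at hι
  have : #ι = #ℕ := by rw [hι, Cardinal.mk_nat]
  obtain ⟨e⟩ := Cardinal.eq.mp this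
  refine ⟨fun k => max ((f (e.symm k)).card) ℵ₀, fun k => le_max_right _ _, ?_, ?_, ?_⟩
  · intro k
    apply max_lt _ hκ
    exact Cardinal.lt_ord.mp (hlsub ▸ Ordinal.lt_lsub f _)
  · intro c hc
    obtain ⟨i, hi⟩ := Ordinal.lt_lsub_iff.mp (by rw [hlsub]; exact Cardinal.ord_lt_ord.2 hc)
    refine ⟨e i, le_trans ?_ (le_max_left _ _)⟩
    have := Ordinal.card_le_card hi
    rw [Cardinal.card_ord] at this
    rwa [e.symm_apply_apply]
  · apply le_antisymm
    · calc Cardinal.sum (fun k => max ((f (e.symm k)).card) ℵ₀)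
          ≤ Cardinal.sum (fun _ : ℕ => κ) := Cardinal.sum_le_sum _ _ (fun k =>
            (max_lt (Cardinal.lt_ord.mp (hlsub ▸ Ordinal.lt_lsub f _)) hκ).le)
        _ = #ℕ * κ := Cardinal.sum_const' ℕ κ
        _ = ℵ₀ * κ := by rw [Cardinal.mk_nat]
        _ = κ := Cardinal.aleph0_mul_eq hκ.le
    · by_contra hcon
      push_neg at hcon
      set c := Cardinal.sum (fun k => max ((f (e.symm k)).card) ℵ₀) with hcdef
      have h1 : Order.succ c < κ := my_succ_lt κ hκ hcf c hcon
      obtain ⟨i, hi⟩ := Ordinal.lt_lsub_iff.mp (by rw [hlsub]; exact Cardinal.ord_lt_ord.2 h1)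
      have h2 : Order.succ c ≤ (f i).card := by
        have := Ordinal.card_le_card hi
        rwa [Cardinal.card_ord] at this
      have h3 : (f i).card ≤ max ((f (e.symm (e i))).card) ℵ₀ := by
        rw [e.symm_apply_apply]; exact le_max_left _ _
      have h4 : max ((f (e.symm (e i))).card) ℵ₀ ≤ c := Cardinal.le_sum _ (e i)
      exact absurd (h2.trans (h3.trans h4)) (not_le.mpr (Order.lt_succ c))



/-- If all separated subsets of a metric space are small, its weight is small. -/
lemma my_tweight_le (Y : Type) [MetricSpace Y] (l : Cardinal.{0}) (hl : ℵ₀ ≤ l)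
    (h : ∀ n : ℕ, ∀ T : Set Y,
      (T.Pairwise fun a b => 1/(n+1 : ℝ) ≤ dist a b) → #T ≤ l) :
    tweight Y ≤ l := by
  -- maximal separated sets
  have hmax : ∀ n : ℕ, ∃ D : Set Y,
      (D.Pairwise fun a b => 1/(n+1 : ℝ) ≤ dist a b) ∧
      ∀ y : Y, ∃ x ∈ D, dist y x < 1/(n+1 : ℝ) := by
    intro n
    have hchaincond : ∀ c ⊆ {T : Set Y | T.Pairwise fun a b => 1/(n+1 : ℝ) ≤ dist a b},
        IsChain (· ⊆ ·) c → ∃ ub ∈ {T : Set Y | T.Pairwise fun a b => 1/(n+1 : ℝ) ≤ dist a b},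
          ∀ s ∈ c, s ⊆ ub := by
      intro c hc hchain
      refine ⟨⋃₀ c, ?_, fun s hs => Set.subset_sUnion_of_mem hs⟩
      intro a ha b hb hne
      obtain ⟨Ta, hTa, haT⟩ := ha
      obtain ⟨Tb, hTb, hbT⟩ := hb
      rcases hchain.total hTa hTb with hsub | hsub
      · exact hc hTb (hsub haT) hbT hne
      · exact hc hTa haT (hsub hbT) hne
    obtain ⟨D, hD⟩ := zorn_subset _ hchaincond
    · refine ⟨D, hD.prop, ?_⟩
      intro y
      by_contra hy
      push_neg at hy
      have hymem : y ∉ D := by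
        intro hmem
        have h0 := hy y hmem
        rw [dist_self] at h0
        have : (0:ℝ) < 1/(n+1:ℝ) := by positivity
        linarith
      have : insert y D ∈ {T : Set Y | T.Pairwise fun a b => 1/(n+1 : ℝ) ≤ dist a b} := by
        apply Set.Pairwise.insert hD.prop
        intro b hb _
        constructor
        · exact hy b hb
        · rw [dist_comm]; exact hy b hb
      have heq : D = insert y D := hD.eq_of_subset this (Set.subset_insert y D)
      apply hymem
      rw [heq]
      exact Set.mem_insert y D
  choose D hDsep hDdense using hmax
  set B : Set (Set Y) := Set.range (fun p : (Σ n : ℕ, ↥(D n)) => Metric.ball (p.2 : Y) (2/(p.1+1 : ℝ))) with hB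
  have hbasis : IsTopologicalBasis B := by
    apply isTopologicalBasis_of_isOpen_of_nhds
    · rintro u ⟨p, rfl⟩
      exact isOpen_ball
    · intro a u hau hu
      obtain ⟨ε, hε, hball⟩ := Metric.isOpen_iff.mp hu a hau
      obtain ⟨n, hn⟩ := exists_nat_one_div_lt (show 0 < ε/3 by linarith)
      obtain ⟨x, hxD, hx⟩ := hDdense n a
      refine ⟨Metric.ball (x : Y) (2/(n+1 : ℝ)), ⟨⟨n, ⟨x, hxD⟩⟩, rfl⟩, ?_, ?_⟩
      · rw [Metric.mem_ball]
        have : (0:ℝ) < 1/(n+1 : ℝ) := by positivity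
        calc dist a x < 1/(n+1:ℝ) := hx
          _ < 2/(n+1:ℝ) := by rw [div_lt_div_iff₀ (by positivity) (by positivity)]; ring_nf; nlinarith
      · intro y hy
        apply hball
        rw [Metric.mem_ball] at hy ⊢
        have h1 : (1:ℝ)/(n+1) < ε/3 := hn
        calc dist y a ≤ dist y x + dist x a := dist_triangle y x a
          _ < 2/(n+1:ℝ) + 1/(n+1:ℝ) := by
              apply add_lt_add hy
              rw [dist_comm]; exact hx
          _ = 3 * (1/(n+1:ℝ)) := by ring
          _ < 3 * (ε/3) := by linarith
          _ = ε := by ring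
  have hcard : #B ≤ l := by
    calc #B ≤ #(Σ n : ℕ, ↥(D n)) := Cardinal.mk_range_le
      _ = Cardinal.sum (fun n => #(↥(D n))) := Cardinal.mk_sigma _
      _ ≤ Cardinal.sum (fun _ : ℕ => l) := Cardinal.sum_le_sum _ _ (fun n => h n (D n) (hDsep n))
      _ = #ℕ * l := Cardinal.sum_const' ℕ l
      _ = ℵ₀ * l := by rw [Cardinal.mk_nat]
      _ = l := Cardinal.aleph0_mul_eq hl
  exact le_trans (csInf_le' ⟨B, hbasis, rfl⟩) hcard

/-- Conversely, big weight gives big separated sets. -/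
lemma my_exists_sep (κ : Cardinal.{0}) (hκ : ℵ₀ < κ) (Y : Type) [MetricSpace Y]
    (hw : κ ≤ tweight Y) (l : Cardinal.{0}) (hl : l < κ) :
    ∃ (n : ℕ) (T : Set Y), (T.Pairwise fun a b => 1/(n+1 : ℝ) ≤ dist a b) ∧ l ≤ #T := by
  by_contra hcon
  push_neg at hcon
  have h : ∀ n : ℕ, ∀ T : Set Y,
      (T.Pairwise fun a b => 1/(n+1 : ℝ) ≤ dist a b) → #T ≤ max l ℵ₀ := by
    intro n T hT
    exact le_trans (hcon n T hT).le (le_max_left _ _)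
  have := my_tweight_le Y (max l ℵ₀) (le_max_right _ _) h
  exact absurd (hw.trans this) (not_le.mpr (max_lt hl hκ))

/-- Every relatively open piece of `S` contains large separated sets. -/
def Rich (κ : Cardinal.{0}) {X : Type} [MetricSpace X] (S : Set X) : Prop :=
  ∀ W : Set X, IsOpen W → (S ∩ W).Nonempty → ∀ l : Cardinal.{0}, l < κ →
    ∃ δ : ℝ, 0 < δ ∧ ∃ T : Set X, T ⊆ S ∩ W ∧ l ≤ #T ∧
      T.Pairwise fun a b => δ ≤ dist a b

def GoodS (κ : Cardinal.{0}) {X : Type} [MetricSpace X] (S : Set X) : Prop :=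
  Rich κ S ∧ IsClosed S ∧ S.Nonempty ∧ Bornology.IsBounded S

lemma my_child_good (κ : Cardinal.{0}) {X : Type} [MetricSpace X] {S : Set X}
    (hS : GoodS κ S) {y : X} (hy : y ∈ S) {ρ : ℝ} (hρ : 0 < ρ) :
    GoodS κ (closure (S ∩ ball y ρ)) ∧ closure (S ∩ ball y ρ) ⊆ S ∩ closedBall y ρ := by
  obtain ⟨hRich, hCl, hNe, hBdd⟩ := hS
  have hsub : closure (S ∩ ball y ρ) ⊆ S ∩ closedBall y ρ := by
    intro w hw
    constructor
    · have : closure (S ∩ ball y ρ) ⊆ closure S :=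
        closure_mono Set.inter_subset_left
      rw [hCl.closure_eq] at this
      exact this hw
    · exact Metric.closure_ball_subset_closedBall
        ((closure_mono Set.inter_subset_right) hw)
  have hyin : y ∈ closure (S ∩ ball y ρ) :=
    subset_closure ⟨hy, mem_ball_self hρ⟩
  refine ⟨⟨?_, isClosed_closure, ⟨y, hyin⟩, ?_⟩, hsub⟩
  · intro W hW hne l hl
    obtain ⟨z, hzc, hzW⟩ := hne
    have hq : ((S ∩ ball y ρ) ∩ W).Nonempty := by
      rw [_root_.mem_closure_iff] at hzc
      obtain ⟨q, hq1, hq2⟩ := hzc W hW hzW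
      exact ⟨q, hq2, hq1⟩
    obtain ⟨q, ⟨hqS, hqb⟩, hqW⟩ := hq
    obtain ⟨δ, hδ, T, hTsub, hTcard, hTsep⟩ :=
      hRich (ball y ρ ∩ W) (isOpen_ball.inter hW) ⟨q, hqS, hqb, hqW⟩ l hl
    refine ⟨δ, hδ, T, ?_, hTcard, hTsep⟩
    intro t ht
    obtain ⟨htS, htb, htW⟩ := hTsub ht
    exact ⟨subset_closure ⟨htS, htb⟩, htW⟩
  · exact (Metric.isBounded_closedBall.subset
      (hsub.trans Set.inter_subset_right))

lemma my_exists_family (κ : Cardinal.{0}) (hκ : ℵ₀ < κ) {X : Type} [MetricSpace X]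
    (μ : ℕ → Cardinal.{0}) (hμlt : ∀ k, μ k < κ)
    {S : Set X} (hS : GoodS κ S) (ε : ℝ) (hε : 0 < ε) :
    ∃ C : (Σ k : ℕ, ((μ k).ord.ToType)) → Set X,
      (∀ i, C i ⊆ S ∧ GoodS κ (C i) ∧ Metric.diam (C i) ≤ ε) ∧
      (∀ z ∈ S, ∃ r : ℝ, 0 < r ∧ ∀ i j, (C i ∩ Metric.ball z r).Nonempty →
        (C j ∩ Metric.ball z r).Nonempty → i = j) := by
  obtain ⟨hRich, hCl, hNe, hBdd⟩ := hS
  -- countably many separated anchor points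
  obtain ⟨δ₀, hδ₀, T₀, hT₀sub, hT₀card, hT₀sep⟩ :=
    hRich Set.univ isOpen_univ (by simpa using hNe) ℵ₀ hκ
  haveI : Infinite ↥T₀ := Cardinal.infinite_iff.mpr hT₀card
  set emb := Infinite.natEmbedding ↥T₀ with hemb
  set x : ℕ → X := fun k => ((emb k : ↥T₀) : X) with hx
  have hxT : ∀ k, x k ∈ T₀ := fun k => (emb k).2
  have hxS : ∀ k, x k ∈ S := fun k => (hT₀sub (hxT k)).1
  have hxsep : ∀ k k', k ≠ k' → δ₀ ≤ dist (x k) (x k') := by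
    intro k k' hkk
    have hne : x k ≠ x k' := by
      intro hcon
      exact hkk (emb.injective (Subtype.ext hcon))
    exact hT₀sep (hxT k) (hxT k') hne
  -- separated sets at each scale
  have hk : ∀ k : ℕ, ∃ δ : ℝ, 0 < δ ∧ ∃ T : Set X,
      T ⊆ S ∩ ball (x k) (δ₀/4) ∧ μ k ≤ #T ∧
      T.Pairwise fun a b => δ ≤ dist a b := by
    intro k
    exact hRich (ball (x k) (δ₀/4)) isOpen_ball
      ⟨x k, hxS k, mem_ball_self (by linarith)⟩ (μ k) (hμlt k)
  choose δ hδpos T hTsub hTcard hTsep using hk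
  have hg : ∀ k : ℕ, Nonempty (((μ k).ord.ToType) ↪ ↥(T k)) := by
    intro k
    rw [← Cardinal.le_def]
    rw [Cardinal.mk_toType, Cardinal.card_ord]
    exact hTcard k
  have g : ∀ k : ℕ, ((μ k).ord.ToType) ↪ ↥(T k) := fun k => (hg k).some
  set y : (Σ k : ℕ, ((μ k).ord.ToType)) → X := fun i => ((g i.1 i.2 : ↥(T i.1)) : X) with hy
  have hyT : ∀ i, y i ∈ T i.1 := fun i => (g i.1 i.2).2
  have hyS : ∀ i, y i ∈ S := fun i => (hTsub i.1 (hyT i)).1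
  have hyball : ∀ i, dist (y i) (x i.1) < δ₀/4 := by
    intro i
    have := (hTsub i.1 (hyT i)).2
    rwa [Metric.mem_ball] at this
  have hysep : ∀ (k : ℕ) (b b' : (μ k).ord.ToType), b ≠ b' →
      δ k ≤ dist (y ⟨k, b⟩) (y ⟨k, b'⟩) := by
    intro k b b' hbb
    have hne : y ⟨k, b⟩ ≠ y ⟨k, b'⟩ := by
      intro hcon
      exact hbb ((g k).injective (Subtype.ext hcon))
    exact hTsep k (hyT ⟨k, b⟩) (hyT ⟨k, b'⟩) hne
  set ρ : ℕ → ℝ := fun k => min (δ k / 8) (min (ε/4) (δ₀/16)) with hρdef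
  have hρpos : ∀ k, 0 < ρ k := by
    intro k
    have := hδpos k
    simp only [hρdef, lt_min_iff]
    refine ⟨by linarith, by linarith, by linarith⟩
  have hρδ : ∀ k, ρ k ≤ δ k / 8 := fun k => min_le_left _ _
  have hρε : ∀ k, ρ k ≤ ε/4 := fun k => (min_le_right _ _).trans (min_le_left _ _)
  have hρδ₀ : ∀ k, ρ k ≤ δ₀/16 := fun k => (min_le_right _ _).trans (min_le_right _ _)
  set C : (Σ k : ℕ, ((μ k).ord.ToType)) → Set X :=
    fun i => closure (S ∩ ball (y i) (ρ i.1)) with hC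
  have hchild := fun i => my_child_good κ ⟨hRich, hCl, hNe, hBdd⟩ (hyS i) (hρpos i.1)
  have hCsub : ∀ i, C i ⊆ S ∩ closedBall (y i) (ρ i.1) := fun i => (hchild i).2
  refine ⟨C, ?_, ?_⟩
  · intro i
    refine ⟨(hCsub i).trans Set.inter_subset_left, (hchild i).1, ?_⟩
    calc Metric.diam (C i) ≤ Metric.diam (closedBall (y i) (ρ i.1)) :=
          Metric.diam_mono ((hCsub i).trans Set.inter_subset_right)
            Metric.isBounded_closedBall
      _ ≤ 2 * ρ i.1 := Metric.diam_closedBall (hρpos i.1).le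
      _ ≤ 2 * (ε/4) := by have := hρε i.1; linarith
      _ ≤ ε := by linarith
  · intro z hz
    have hcross : ∀ i, (C i ∩ ball z (δ₀/8)).Nonempty → dist z (x i.1) < 7*δ₀/16 := by
      rintro i ⟨w, hwC, hwb⟩
      obtain ⟨hwS, hwB⟩ := hCsub i hwC
      rw [Metric.mem_closedBall] at hwB
      rw [Metric.mem_ball] at hwb
      have h1 : ρ i.1 ≤ δ₀/16 := hρδ₀ i.1
      have h2 : dist (y i) (x i.1) < δ₀/4 := hyball i
      have h3 : dist z w ≤ dist z (x i.1) - dist w (y i) - dist (y i) (x i.1) + 7*δ₀/16 - δ₀/8 ∨ True := Or.inr trivial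
      have htri : dist z (x i.1) ≤ dist z w + dist w (y i) + dist (y i) (x i.1) :=
        dist_triangle4 z w (y i) (x i.1)
      have hzw : dist z w < δ₀/8 := by rw [dist_comm]; exact hwb
      linarith
    by_cases hex : ∃ i, (C i ∩ ball z (δ₀/8)).Nonempty
    · obtain ⟨i₀, hi₀⟩ := hex
      refine ⟨min (δ₀/8) (δ i₀.1 / 4), by
        have := hδpos i₀.1
        simp only [lt_min_iff]; exact ⟨by linarith, by linarith⟩, ?_⟩
      have hrle : min (δ₀/8) (δ i₀.1 / 4) ≤ δ₀/8 := min_le_left _ _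
      have hsmall : ∀ i, (C i ∩ ball z (min (δ₀/8) (δ i₀.1 / 4))).Nonempty →
          (C i ∩ ball z (δ₀/8)).Nonempty := by
        rintro i ⟨w, hw1, hw2⟩
        exact ⟨w, hw1, Metric.ball_subset_ball hrle hw2⟩
      have hfst : ∀ i, (C i ∩ ball z (min (δ₀/8) (δ i₀.1 / 4))).Nonempty → i.1 = i₀.1 := by
        intro i hi
        by_contra hne
        have h1 := hcross i (hsmall i hi)
        have h2 := hcross i₀ hi₀
        have h3 := hxsep i.1 i₀.1 hne
        have h4 : dist (x i.1) (x i₀.1) ≤ dist (x i.1) z + dist z (x i₀.1) :=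
          dist_triangle _ _ _
        rw [dist_comm (x i.1) z] at h4
        linarith
      rintro ⟨ki, bi⟩ ⟨kj, bj⟩ hi hj
      have h1 : ki = i₀.1 := hfst ⟨ki, bi⟩ hi
      have h2 : kj = i₀.1 := hfst ⟨kj, bj⟩ hj
      have hkk : kj = ki := h2.trans h1.symm
      subst hkk
      have hbb : bi = bj := by
        by_contra hbb
        obtain ⟨w, hwC, hwb⟩ := hi
        obtain ⟨w', hwC', hwb'⟩ := hj
        have hd1 : dist w (y ⟨kj, bi⟩) ≤ ρ kj := by
          have := (hCsub ⟨kj, bi⟩ hwC).2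
          rwa [Metric.mem_closedBall] at this
        have hd2 : dist w' (y ⟨kj, bj⟩) ≤ ρ kj := by
          have := (hCsub ⟨kj, bj⟩ hwC').2
          rwa [Metric.mem_closedBall] at this
        have hsep := hysep kj bi bj hbb
        rw [Metric.mem_ball] at hwb hwb'
        have hww : dist w w' ≤ dist w z + dist z w' := dist_triangle _ _ _
        rw [dist_comm z w'] at hww
        have hr2 : min (δ₀/8) (δ i₀.1 / 4) ≤ δ kj / 4 := by rw [h1]; exact min_le_right _ _
        have htri2 : dist (y ⟨kj, bi⟩) (y ⟨kj, bj⟩) ≤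
            dist (y ⟨kj, bi⟩) w + dist w w' + dist w' (y ⟨kj, bj⟩) :=
          dist_triangle4 _ _ _ _
        rw [dist_comm (y ⟨kj, bi⟩) w] at htri2
        have hρkj : ρ kj ≤ δ kj / 8 := hρδ kj
        have hδkj := hδpos kj
        linarith
      rw [hbb]
    · refine ⟨δ₀/8, by linarith, ?_⟩
      intro i j hi hj
      exact absurd ⟨i, hi⟩ hex

/-- finite sequences: tree level sets -/
def treeSets {X : Type} (S₀ : Set X) {A : Type} (F : Set X → ℕ → A → Set X) :
    List A → Set X
  | [] => S₀
  | a :: s => F (treeSets S₀ F s) s.length a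

/-- the (reversed) initial segment of a branch -/
def seg {A : Type} (x : ℕ → A) : ℕ → List A
  | 0 => []
  | n + 1 => x n :: seg x n

lemma seg_length {A : Type} (x : ℕ → A) (n : ℕ) : (seg x n).length = n := by
  induction n with
  | zero => rfl
  | succ n ih => simp [seg, ih]

lemma seg_eq_of {A : Type} (x y : ℕ → A) (n : ℕ) (h : ∀ i < n, x i = y i) :
    seg x n = seg y n := by
  induction n with
  | zero => rfl
  | succ n ih =>
      simp only [seg]
      rw [h n (Nat.lt_succ_self n), ih (fun i hi => h i (hi.trans (Nat.lt_succ_self n)))]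

lemma seg_eq_iff {A : Type} (x y : ℕ → A) (n : ℕ) (h : seg x n = seg y n) :
    ∀ i < n, x i = y i := by
  induction n with
  | zero => intro i hi; omega
  | succ n ih =>
      simp only [seg, List.cons.injEq] at h
      intro i hi
      rcases Nat.lt_succ_iff_lt_or_eq.mp hi with hlt | heq
      · exact ih h.2 i hlt
      · subst heq; exact h.1

lemma my_cyl_mem_nhds {A : Type} [TopologicalSpace A] [DiscreteTopology A]
    (x : ℕ → A) (n : ℕ) : {y : ℕ → A | ∀ i < n, y i = x i} ∈ nhds x := by
  have heq : {y : ℕ → A | ∀ i < n, y i = x i} =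
      Set.pi {i : ℕ | i < n} (fun i => {x i}) := by
    ext y
    simp [Set.mem_pi]
  rw [heq]
  apply IsOpen.mem_nhds
  · exact isOpen_set_pi (Set.finite_Iio n) (fun i _ => isOpen_discrete _)
  · intro i _
    rfl

lemma my_cyl_basis {A : Type} [TopologicalSpace A] [DiscreteTopology A]
    (x : ℕ → A) {s : Set (ℕ → A)} (hs : s ∈ nhds x) :
    ∃ n, {y : ℕ → A | ∀ i < n, y i = x i} ⊆ s := by
  rw [nhds_pi] at hs
  obtain ⟨I, hIfin, t, ht, hsub⟩ := Filter.mem_pi.mp hs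
  have hmem : ∀ i, x i ∈ t i := by
    intro i
    have := ht i
    rw [nhds_discrete] at this
    exact this
  obtain ⟨n, hn⟩ := hIfin.bddAbove
  refine ⟨n + 1, ?_⟩
  intro y hy
  apply hsub
  intro i hi
  have : i < n + 1 := Nat.lt_succ_of_le (hn hi)
  rw [Set.mem_setOf_eq] at hy
  rw [hy i this]
  exact hmem i

/-- If `κ` is uncountable of cofinality `ω` and a completely metrizable space `X`
has a closed subset which is not locally `<κ`-like, then `X` contains a closed
subspace homeomorphic to `κ^ω`. -/
theorem closed_copy_of_kappa_omega (κ : Cardinal) (hκ : ℵ₀ < κ)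
    (hcf : κ.ord.cof = ℵ₀) (A : Type) [TopologicalSpace A] [DiscreteTopology A]
    (hA : #A = κ) (X : Type) [MetricSpace X] [CompleteSpace X]
    (K : Set X) (hK : IsClosed K) (hnot : ¬ LocallyLtLike K κ) :
    ∃ Z : Set X, IsClosed Z ∧ Nonempty (Z ≃ₜ (ℕ → A)) := by
  haveI : Nonempty A := by
    rw [← Cardinal.mk_ne_zero_iff, hA]
    exact fun h => absurd (h ▸ hκ) (by simp)
  haveI : Inhabited A := ⟨Classical.arbitrary A⟩
  -- cofinal sequence of cardinals and the index equivalence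
  obtain ⟨μ, hμinf, hμlt, hμcof, hμsum⟩ := my_cof_seq κ hκ hcf
  have hmkSig : #(Σ k : ℕ, ((μ k).ord.ToType)) = #A := by
    rw [hA, Cardinal.mk_sigma, ← hμsum]
    congr 1
    funext k
    rw [Cardinal.mk_toType, Cardinal.card_ord]
  obtain ⟨e⟩ := Cardinal.eq.mp hmkSig
  -- extract the root set
  rw [LocallyLtLike] at hnot
  push_neg at hnot
  obtain ⟨U, hUopen, hUne, hU⟩ := hnot
  obtain ⟨W₀, hW₀open, hW₀eq⟩ := isOpen_induced_iff.mp hUopen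
  obtain ⟨p, hpU⟩ := hUne
  have hpW₀ : (p : X) ∈ W₀ := by
    rw [← hW₀eq] at hpU
    exact hpU
  set S₀ : Set X := closure (K ∩ W₀ ∩ ball (p : X) 1) with hS₀def
  have hpS₀ : K ∩ W₀ ∩ ball (p : X) 1 ⊆ S₀ := subset_closure
  have hGood₀ : GoodS κ S₀ := by
    refine ⟨?_, isClosed_closure, ⟨p, hpS₀ ⟨⟨p.2, hpW₀⟩, mem_ball_self one_pos⟩⟩, ?_⟩
    · -- Rich
      intro W hW hne l hl
      obtain ⟨z, hzS, hzW⟩ := hne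
      have hq : (W ∩ (K ∩ W₀ ∩ ball (p : X) 1)).Nonempty := by
        rw [hS₀def, _root_.mem_closure_iff] at hzS
        exact hzS W hW hzW
      obtain ⟨q, hqW, ⟨hqK, hqW₀⟩, hqb⟩ := hq
      set O : Set X := W₀ ∩ (ball (p : X) 1 ∩ W) with hOdef
      have hOopen : IsOpen O := hW₀open.inter (isOpen_ball.inter hW)
      set V' : Set ↥K := Subtype.val ⁻¹' O with hV'def
      have hV'open : IsOpen V' := hOopen.preimage continuous_subtype_val
      have hV'ne : V'.Nonempty := ⟨⟨q, hqK⟩, hqW₀, hqb, hqW⟩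
      have hV'U : V' ⊆ U := by
        intro v hv
        rw [← hW₀eq]
        exact hv.1
      have hwV : κ ≤ tweight ↥V' := hU V' hV'open hV'ne hV'U
      obtain ⟨n, T', hsep', hcard'⟩ := my_exists_sep κ hκ ↥V' hwV l hl
      set ι : ↥V' → X := fun v => ((v : ↥K) : X) with hιdef
      have hιinj : Function.Injective ι :=
        Subtype.val_injective.comp Subtype.val_injective
      refine ⟨1/(n+1 : ℝ), by positivity, ι '' T', ?_, ?_, ?_⟩
      · rintro t ⟨v, hvT, rfl⟩
        have hvO : ((v : ↥K) : X) ∈ O := v.2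
        exact ⟨hpS₀ ⟨⟨(v : ↥K).2, hvO.1⟩, hvO.2.1⟩, hvO.2.2⟩
      · rw [Cardinal.mk_image_eq hιinj]
        exact hcard'
      · rintro a ⟨va, hvaT, rfl⟩ b ⟨vb, hvbT, rfl⟩ hne
        have hvne : va ≠ vb := fun h => hne (congrArg ι h)
        exact hsep' hvaT hvbT hvne
    · -- bounded
      exact ((Metric.isBounded_ball (x := (p : X)) (r := 1)).subset
        Set.inter_subset_right).closure
  -- the choice function for children
  have hfam' : ∀ (S : Set X) (n : ℕ), ∃ C : A → Set X, GoodS κ S →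
      ((∀ a, C a ⊆ S ∧ GoodS κ (C a) ∧ Metric.diam (C a) ≤ (1/2 : ℝ)^n) ∧
       (∀ z ∈ S, ∃ r : ℝ, 0 < r ∧ ∀ a b : A, (C a ∩ ball z r).Nonempty →
          (C b ∩ ball z r).Nonempty → a = b)) := by
    intro S n
    by_cases h : GoodS κ S
    · obtain ⟨C₀, hC₀1, hC₀2⟩ := my_exists_family κ hκ μ hμlt h ((1/2 : ℝ)^n) (by positivity)
      refine ⟨fun a => C₀ (e.symm a), fun _ => ⟨fun a => hC₀1 (e.symm a), ?_⟩⟩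
      intro z hz
      obtain ⟨r, hr, huniq⟩ := hC₀2 z hz
      exact ⟨r, hr, fun a b ha hb => e.symm.injective (huniq _ _ ha hb)⟩
    · exact ⟨fun _ => ∅, fun hg => absurd hg h⟩
  choose Cf hCf using hfam'
  set V : List A → Set X := treeSets S₀ Cf with hVdef
  have hVcons : ∀ (a : A) (s : List A), V (a :: s) = Cf (V s) s.length a := by
    intro a s
    rfl
  have hGood : ∀ s : List A, GoodS κ (V s) := by
    intro s
    induction s with
    | nil => exact hGood₀
    | cons a s ih =>
        rw [hVcons]
        exact ((hCf (V s) s.length ih).1 a).2.1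
  have hVsub : ∀ (a : A) (s : List A), V (a :: s) ⊆ V s := by
    intro a s
    rw [hVcons]
    exact ((hCf (V s) s.length (hGood s)).1 a).1
  have hVne : ∀ s, (V s).Nonempty := fun s => (hGood s).2.2.1
  have hVclosed : ∀ s, IsClosed (V s) := fun s => (hGood s).2.1
  have hVbdd : ∀ s, Bornology.IsBounded (V s) := fun s => (hGood s).2.2.2
  have hVdiam : ∀ s : List A, Metric.diam (V s) ≤ 2 * (1/2 : ℝ)^s.length := by
    intro s
    cases s with
    | nil =>
        have h1 : V ([] : List A) ⊆ closedBall (p : X) 1 := by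
          intro w hw
          exact Metric.closure_ball_subset_closedBall
            ((closure_mono Set.inter_subset_right) hw)
        calc Metric.diam (V ([] : List A)) ≤ Metric.diam (closedBall (p : X) 1) :=
              Metric.diam_mono h1 Metric.isBounded_closedBall
          _ ≤ 2 * 1 := Metric.diam_closedBall one_pos.le
          _ = 2 * (1/2 : ℝ)^(List.length ([] : List A)) := by norm_num
    | cons a s =>
        rw [hVcons]
        have h2 := ((hCf (V s) s.length (hGood s)).1 a).2.2
        calc Metric.diam (Cf (V s) s.length a) ≤ (1/2 : ℝ)^s.length := h2
          _ = 2 * (1/2 : ℝ)^(s.length + 1) := by ring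
          _ = 2 * (1/2 : ℝ)^((a :: s).length) := by rw [List.length_cons]
  have hdisc : ∀ s : List A, ∀ z ∈ V s, ∃ r : ℝ, 0 < r ∧
      ∀ a b : A, (V (a :: s) ∩ ball z r).Nonempty →
        (V (b :: s) ∩ ball z r).Nonempty → a = b := by
    intro s z hz
    obtain ⟨r, hr, huniq⟩ := (hCf (V s) s.length (hGood s)).2 z hz
    refine ⟨r, hr, ?_⟩
    intro a b ha hb
    rw [hVcons] at ha hb
    exact huniq a b ha hb
  -- disjointness at each level
  have hdisj : ∀ n : ℕ, ∀ s t : List A, s.length = n → t.length = n →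
      (V s ∩ V t).Nonempty → s = t := by
    intro n
    induction n with
    | zero =>
        intro s t hs ht _
        rw [List.length_eq_zero_iff.mp hs, List.length_eq_zero_iff.mp ht]
    | succ n ih =>
        intro s t hs ht hne
        cases s with
        | nil => simp at hs
        | cons a s' =>
            cases t with
            | nil => simp at ht
            | cons b t' =>
                obtain ⟨z, hz1, hz2⟩ := hne
                have hs' : s'.length = n := by simpa using hs
                have ht' : t'.length = n := by simpa using ht
                have hst : s' = t' :=
                  ih s' t' hs' ht' ⟨z, hVsub a s' hz1, hVsub b t' hz2⟩
                subst hst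
                obtain ⟨r, hr, huniq⟩ := hdisc s' z (hVsub a s' hz1)
                have hab : a = b := huniq a b ⟨z, hz1, mem_ball_self hr⟩
                  ⟨z, hz2, mem_ball_self hr⟩
                rw [hab]
  -- level sets
  set Lev : ℕ → Set X := fun n => {w | ∃ s : List A, s.length = n ∧ w ∈ V s}
    with hLevdef
  have hLevsub : ∀ n, Lev (n+1) ⊆ Lev n := by
    rintro n w ⟨s, hs, hw⟩
    cases s with
    | nil => simp at hs
    | cons a s' => exact ⟨s', by simpa using hs, hVsub a s' hw⟩
  -- the key discreteness property at each level
  have hR : ∀ n : ℕ, ∀ z ∈ Lev n, ∃ r : ℝ, 0 < r ∧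
      ∀ s t : List A, s.length = n+1 → t.length = n+1 →
        (V s ∩ ball z r).Nonempty → (V t ∩ ball z r).Nonempty → s = t := by
    intro n
    induction n with
    | zero =>
        rintro z ⟨s₀, hs₀, hz⟩
        rw [List.length_eq_zero_iff.mp hs₀] at hz
        obtain ⟨r, hr, huniq⟩ := hdisc [] z hz
        refine ⟨r, hr, ?_⟩
        intro s t hs ht hsne htne
        cases s with
        | nil => simp at hs
        | cons a s' =>
            cases t with
            | nil => simp at ht
            | cons b t' =>
                have hs'nil : s' = [] := List.length_eq_zero_iff.mp (by simpa using hs)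
                have ht'nil : t' = [] := List.length_eq_zero_iff.mp (by simpa using ht)
                subst hs'nil; subst ht'nil
                rw [huniq a b hsne htne]
    | succ n ih =>
        rintro z ⟨s₀, hs₀, hz⟩
        cases s₀ with
        | nil => simp at hs₀
        | cons a₀ s₀' =>
            have hs₀' : s₀'.length = n := by simpa using hs₀
            have hzLev : z ∈ Lev n := ⟨s₀', hs₀', hVsub a₀ s₀' hz⟩
            obtain ⟨r1, hr1, huniq1⟩ := ih z hzLev
            obtain ⟨r2, hr2, huniq2⟩ := hdisc (a₀ :: s₀') z hz
            refine ⟨min r1 r2, lt_min hr1 hr2, ?_⟩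
            intro s t hs ht hsne htne
            cases s with
            | nil => simp at hs
            | cons a s' =>
                cases t with
                | nil => simp at ht
                | cons b t' =>
                    have hs' : s'.length = n + 1 := by simpa using hs
                    have ht' : t'.length = n + 1 := by simpa using ht
                    have hBsub : ball z (min r1 r2) ⊆ ball z r1 :=
                      Metric.ball_subset_ball (min_le_left _ _)
                    have hsmem : (V s' ∩ ball z r1).Nonempty := by
                      obtain ⟨w, hw1, hw2⟩ := hsne
                      exact ⟨w, hVsub a s' hw1, hBsub hw2⟩
                    have htmem : (V t' ∩ ball z r1).Nonempty := by
                      obtain ⟨w, hw1, hw2⟩ := htne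
                      exact ⟨w, hVsub b t' hw1, hBsub hw2⟩
                    have hself : (V (a₀ :: s₀') ∩ ball z r1).Nonempty :=
                      ⟨z, hz, mem_ball_self hr1⟩
                    have heq1 : s' = a₀ :: s₀' :=
                      huniq1 s' _ hs' (by simpa using hs₀) hsmem hself
                    have heq2 : t' = a₀ :: s₀' :=
                      huniq1 t' _ ht' (by simpa using hs₀) htmem hself
                    rw [heq1] at hsne
                    rw [heq2] at htne
                    have hBsub2 : ball z (min r1 r2) ⊆ ball z r2 :=
                      Metric.ball_subset_ball (min_le_right _ _)
                    have hab : a = b := by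
                      apply huniq2 a b
                      · obtain ⟨w, hw1, hw2⟩ := hsne
                        exact ⟨w, hw1, hBsub2 hw2⟩
                      · obtain ⟨w, hw1, hw2⟩ := htne
                        exact ⟨w, hw1, hBsub2 hw2⟩
                    rw [heq1, heq2, hab]
  -- the levels are closed
  have hLevClosed : ∀ n, IsClosed (Lev n) := by
    intro n
    induction n with
    | zero =>
        have hLev0 : Lev 0 = V [] := by
          ext w
          constructor
          · rintro ⟨s, hs, hw⟩
            rwa [List.length_eq_zero_iff.mp hs] at hw
          · intro hw
            exact ⟨[], rfl, hw⟩
        rw [hLev0]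
        exact hVclosed []
    | succ n ih =>
        apply isClosed_of_closure_subset
        intro z hzcl
        have hzLevn : z ∈ Lev n := by
          have h1 : closure (Lev (n+1)) ⊆ closure (Lev n) := closure_mono (hLevsub n)
          have h2 := h1 hzcl
          rwa [ih.closure_eq] at h2
        obtain ⟨r, hr, huniq⟩ := hR n z hzLevn
        have hmeets : (ball z r ∩ Lev (n+1)).Nonempty := by
          rw [_root_.mem_closure_iff] at hzcl
          exact hzcl (ball z r) isOpen_ball (mem_ball_self hr)
        obtain ⟨q, hqb, s₁, hs₁, hqV⟩ := hmeets
        have hzVs₁ : z ∈ closure (V s₁) := by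
          rw [_root_.mem_closure_iff]
          intro o ho hzo
          have hzo' : z ∈ o ∩ ball z r := ⟨hzo, mem_ball_self hr⟩
          have hmeets2 : ((o ∩ ball z r) ∩ Lev (n+1)).Nonempty := by
            rw [_root_.mem_closure_iff] at hzcl
            exact hzcl (o ∩ ball z r) (ho.inter isOpen_ball) hzo'
          obtain ⟨q', ⟨hq'o, hq'b⟩, t₁, ht₁, hq'V⟩ := hmeets2
          have ht₁s₁ : t₁ = s₁ :=
            huniq t₁ s₁ ht₁ hs₁ ⟨q', hq'V, hq'b⟩ ⟨q, hqV, hqb⟩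
          exact ⟨q', hq'o, ht₁s₁ ▸ hq'V⟩
        rw [(hVclosed s₁).closure_eq] at hzVs₁
        exact ⟨s₁, hs₁, hzVs₁⟩
  -- nestedness along branches
  have hnested : ∀ (x : ℕ → A) (m n : ℕ), m ≤ n → V (seg x n) ⊆ V (seg x m) := by
    intro x m n hmn
    induction n with
    | zero => rw [Nat.le_zero.mp hmn]
    | succ n ih =>
        rcases Nat.le_succ_iff_eq_or_le.mp hmn with heq | hle
        · rw [heq]
        · exact Set.Subset.trans (hVsub (x n) (seg x n)) (ih hle)
  -- the limit map
  have hlim : ∀ x : ℕ → A, ∃ z : X, ∀ m : ℕ, z ∈ V (seg x m) := by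
    intro x
    set u : ℕ → X := fun n => (hVne (seg x n)).some with hudef
    have hu : ∀ n, u n ∈ V (seg x n) := fun n => (hVne (seg x n)).some_mem
    have hstep : ∀ n : ℕ, dist (u n) (u (n+1)) ≤ 4/2/2^n := by
      intro n
      have h1 : u (n+1) ∈ V (seg x n) := hnested x n (n+1) (Nat.le_succ n) (hu (n+1))
      have h2 := Metric.dist_le_diam_of_mem (hVbdd (seg x n)) (hu n) h1
      have h3 := hVdiam (seg x n)
      rw [seg_length] at h3
      calc dist (u n) (u (n+1)) ≤ 2 * (1/2 : ℝ)^n := h2.trans h3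
        _ = 4/2/2^n := by rw [one_div_pow]; ring
    have hcau : CauchySeq u := cauchySeq_of_le_geometric_two hstep
    obtain ⟨z, hz⟩ := cauchySeq_tendsto_of_complete hcau
    refine ⟨z, fun m => ?_⟩
    apply (hVclosed (seg x m)).mem_of_tendsto hz
    rw [Filter.eventually_atTop]
    exact ⟨m, fun n hn => hnested x m n hn (hu n)⟩
  choose f hf using hlim
  have hdistf : ∀ (x y : ℕ → A) (n : ℕ), seg x n = seg y n →
      dist (f x) (f y) ≤ 2 * (1/2 : ℝ)^n := by
    intro x y n h
    have h1 : f y ∈ V (seg x n) := h ▸ hf y n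
    have h2 := Metric.dist_le_diam_of_mem (hVbdd (seg x n)) (hf x n) h1
    have h3 := hVdiam (seg x n)
    rw [seg_length] at h3
    exact h2.trans h3
  -- injectivity
  have hseg_all : ∀ x y : ℕ → A, f x = f y → ∀ n, seg x n = seg y n := by
    intro x y hxy n
    apply hdisj n _ _ (seg_length x n) (seg_length y n)
    exact ⟨f x, hf x n, hxy ▸ hf y n⟩
  have hinj : Function.Injective f := by
    intro x y hxy
    funext i
    exact seg_eq_iff x y (i+1) (hseg_all x y hxy (i+1)) i (Nat.lt_succ_self i)
  -- continuity
  have hcont : Continuous f := by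
    rw [continuous_iff_continuousAt]
    intro x
    rw [ContinuousAt, Metric.tendsto_nhds]
    intro ε hε
    obtain ⟨n, hn⟩ := exists_pow_lt_of_lt_one (show (0:ℝ) < ε/2 by linarith)
      (show (1/2 : ℝ) < 1 by norm_num)
    filter_upwards [my_cyl_mem_nhds x n] with y hy
    have hseg : seg y n = seg x n := seg_eq_of y x n hy
    calc dist (f y) (f x) ≤ 2 * (1/2 : ℝ)^n := hdistf y x n hseg
      _ < 2 * (ε/2) := by
          have h4 : (0:ℝ) < 2 := by norm_num
          exact (mul_lt_mul_iff_right₀ h4).mpr hn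
      _ = ε := by ring
  -- the range is the intersection of the levels
  have hrange : Set.range f = ⋂ n, Lev n := by
    apply Set.Subset.antisymm
    · rintro w ⟨x, rfl⟩
      rw [Set.mem_iInter]
      intro n
      exact ⟨seg x n, seg_length x n, hf x n⟩
    · intro z hz
      rw [Set.mem_iInter] at hz
      have hz' : ∀ n : ℕ, ∃ s : List A, s.length = n ∧ z ∈ V s := hz
      choose σ hσlen hσV using hz'
      have huniqσ : ∀ (n : ℕ) (s : List A), s.length = n → z ∈ V s → s = σ n :=
        fun n s hl hzs => hdisj n s (σ n) hl (hσlen n) ⟨z, hzs, hσV n⟩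
      set x : ℕ → A := fun n => (σ (n+1)).headI with hxdef
      have hcons : ∀ n, σ (n+1) = x n :: σ n := by
        intro n
        obtain ⟨a, t, hat⟩ : ∃ a t, σ (n+1) = a :: t := by
          cases hσ : σ (n+1) with
          | nil =>
              have hl := hσlen (n+1)
              rw [hσ] at hl
              exact absurd hl (by simp)
          | cons a t => exact ⟨a, t, rfl⟩
        have hta : t = σ n := by
          apply huniqσ n t
          · have hl := hσlen (n+1)
            rw [hat] at hl
            simpa using hl
          · have hv := hσV (n+1)
            rw [hat] at hv
            exact hVsub a t hv
        rw [hat, hta]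
        simp [hxdef, hat]
      have hsegσ : ∀ n, seg x n = σ n := by
        intro n
        induction n with
        | zero =>
            have : σ 0 = [] := List.length_eq_zero_iff.mp (hσlen 0)
            rw [this]
            rfl
        | succ n ih =>
            show x n :: seg x n = σ (n+1)
            rw [ih, hcons n]
      refine ⟨x, ?_⟩
      have hb : ∀ n : ℕ, dist (f x) z ≤ 2 * (1/2 : ℝ)^n := by
        intro n
        have h1 : z ∈ V (seg x n) := by rw [hsegσ n]; exact hσV n
        have h2 := Metric.dist_le_diam_of_mem (hVbdd (seg x n)) (hf x n) h1
        have h3 := hVdiam (seg x n)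
        rw [seg_length] at h3
        exact h2.trans h3
      have htend : Filter.Tendsto (fun n : ℕ => 2 * (1/2 : ℝ)^n)
          Filter.atTop (nhds 0) := by
        have h5 := tendsto_pow_atTop_nhds_zero_of_lt_one
          (show (0:ℝ) ≤ 1/2 by norm_num) (show (1/2 : ℝ) < 1 by norm_num)
        have h6 := h5.const_mul (2:ℝ)
        simpa using h6
      have hd0 : dist (f x) z ≤ 0 := ge_of_tendsto' htend hb
      exact dist_le_zero.mp hd0
  -- the embedding
  have hind : IsInducing f := by
    rw [isInducing_iff_nhds]
    intro x
    apply le_antisymm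
    · exact Filter.Tendsto.le_comap (hcont.tendsto x)
    · intro N hN
      obtain ⟨n, hcylsub⟩ := my_cyl_basis x hN
      have hfx : f x ∈ Lev n := ⟨seg x n, seg_length x n, hf x n⟩
      obtain ⟨r, hr, huniq⟩ := hR n (f x) hfx
      rw [Filter.mem_comap]
      refine ⟨ball (f x) r, Metric.ball_mem_nhds _ hr, ?_⟩
      intro y hy
      apply hcylsub
      intro i hi
      have hseg : seg y (n+1) = seg x (n+1) := by
        apply huniq _ _ (seg_length y (n+1)) (seg_length x (n+1))
        · exact ⟨f y, hf y (n+1), hy⟩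
        · exact ⟨f x, hf x (n+1), mem_ball_self hr⟩
      exact seg_eq_iff y x (n+1) hseg i (hi.trans (Nat.lt_succ_self n))
  have hemb : IsEmbedding f := ⟨hind, hinj⟩
  refine ⟨Set.range f, ?_, ⟨hemb.toHomeomorph.symm⟩⟩
  rw [hrange]
  exact isClosed_iInter hLevClosed
end

section
/- Let κ be an uncountable cardinal with cofinality ω and X a completely metrizable space of weight λ ≥ κ such that every closed subspace of X is locally <κ-like. Then X can be partitioned into at most λ completely metrizable subspaces, each of weight strictly less than κ. -/
open Cardinal Set TopologicalSpace

theorem tweight_exists_basis (X : Type*) [TopologicalSpace X] :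
    ∃ B : Set (Set X), IsTopologicalBasis B ∧ #B = tweight X := by
  have h : { c | ∃ B : Set (Set X), IsTopologicalBasis B ∧ #B = c }.Nonempty :=
    ⟨_, {U | IsOpen U}, isTopologicalBasis_opens, rfl⟩
  obtain ⟨B, hB, hc⟩ := csInf_mem h
  exact ⟨B, hB, hc⟩

theorem tweight_le_of_isInducing {α β : Type u} [TopologicalSpace α] [TopologicalSpace β]
    {f : α → β} (hf : Topology.IsInducing f) : tweight α ≤ tweight β := by
  obtain ⟨B, hB, hc⟩ := tweight_exists_basis β
  have h1 : tweight α ≤ #((preimage f) '' B) := csInf_le' ⟨_, hB.isInducing hf, rfl⟩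
  exact h1.trans (hc ▸ Cardinal.mk_image_le)

noncomputable def iterF {X : Type} (g : Set X → Set X) (o : Ordinal.{0}) : Set X :=
  ⋂ β : Set.Iio o, g (iterF g β.1)
termination_by o
decreasing_by exact β.2

theorem iterF_def {X : Type} (g : Set X → Set X) (o : Ordinal.{0}) :
    iterF g o = ⋂ β : Set.Iio o, g (iterF g β.1) := by
  rw [iterF]

theorem iterF_subset {X : Type} (g : Set X → Set X) {β o : Ordinal.{0}} (h : β < o) :
    iterF g o ⊆ g (iterF g β) := by
  rw [iterF_def]
  exact iInter_subset _ (⟨β, h⟩ : Set.Iio o)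

theorem iterF_anti {X : Type} (g : Set X → Set X) {a b : Ordinal.{0}} (h : a ≤ b) :
    iterF g b ⊆ iterF g a := by
  intro x hx
  rw [iterF_def] at hx ⊢
  exact mem_iInter.2 fun β => mem_iInter.1 hx ⟨β.1, lt_of_lt_of_le β.2 h⟩

theorem iterF_succ {X : Type} (g : Set X → Set X) (hg : ∀ K, g K ⊆ K) (o : Ordinal.{0}) :
    iterF g (Order.succ o) = g (iterF g o) := by
  apply Set.Subset.antisymm
  · exact iterF_subset g (Order.lt_succ o)
  · intro x hx
    rw [iterF_def]
    refine mem_iInter.2 fun β => ?_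
    rcases lt_or_eq_of_le (show (β : Ordinal) ≤ o from Order.lt_succ_iff.1 β.2) with h | h
    · exact iterF_subset g h (hg _ hx)
    · rw [h]; exact hx

theorem iterF_closed {X : Type} [TopologicalSpace X] (g : Set X → Set X)
    (hg : ∀ K, IsClosed K → IsClosed (g K)) (o : Ordinal.{0}) : IsClosed (iterF g o) := by
  induction o using Ordinal.induction with
  | _ o ih =>
    rw [iterF_def]
    exact isClosed_iInter fun β => hg _ (ih β.1 β.2)

/-- If `κ` is uncountable of cofinality `ω`, and `X` is a completely metrizable
space of weight `λ ≥ κ` all of whose closed subspaces are locally `<κ`-like, then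
`X` can be partitioned into at most `λ` completely metrizable (equivalently,
`G_δ`) subspaces, each of weight `< κ`. -/
theorem partition_of_locally_small (κ : Cardinal) (hκ : ℵ₀ < κ)
    (hcf : κ.ord.cof = ℵ₀) (X : Type) [MetricSpace X] [CompleteSpace X]
    (lam : Cardinal) (hw : tweight X = lam) (hlam : κ ≤ lam)
    (hloc : ∀ K : Set X, IsClosed K → LocallyLtLike K κ) :
    ∃ P : Set (Set X), P.PairwiseDisjoint id ∧ ⋃₀ P = Set.univ ∧ #P ≤ lam ∧
      ∀ Y ∈ P, IsGδ Y ∧ tweight Y < κ := by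
  classical
  obtain ⟨B, hBbasis, hBcard⟩ := tweight_exists_basis X
  have hBlam : #B = lam := by rw [hBcard, hw]
  -- choice of the open set to remove from each closed nonempty set
  have key : ∀ K : Set X, ∃ U : Set X, IsOpen U ∧
      (IsClosed K → K.Nonempty → ((K ∩ U).Nonempty ∧ tweight ↥(K ∩ U) < κ)) := by
    intro K
    by_cases hK : IsClosed K ∧ K.Nonempty
    · obtain ⟨hKc, hKne⟩ := hK
      have : Nonempty ↥K := hKne.to_subtype
      obtain ⟨V, hVopen, hVne, -, hVw⟩ := hloc K hKc univ isOpen_univ univ_nonempty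
      obtain ⟨U, hUopen, hUV⟩ := isOpen_induced_iff.1 hVopen
      refine ⟨U, hUopen, fun _ _ => ?_⟩
      have himg : Subtype.val '' V = K ∩ U := by rw [← hUV, Subtype.image_preimage_coe]
      constructor
      · rw [← himg]; exact hVne.image _
      · refine lt_of_le_of_lt ?_ hVw
        have hsub : K ∩ U ⊆ K := inter_subset_left
        let f : ↥(K ∩ U) → ↥V := fun x => ⟨⟨x.1, hsub x.2⟩, by
          rw [← hUV]; exact x.2.2⟩
        have hfc : Continuous f :=
          Continuous.subtype_mk (Continuous.subtype_mk continuous_subtype_val _) _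
        have hfi : Topology.IsInducing f :=
          Topology.IsInducing.of_comp hfc
            (continuous_subtype_val.comp continuous_subtype_val)
            (Topology.IsInducing.subtypeVal)
        exact tweight_le_of_isInducing hfi
    · exact ⟨∅, isOpen_empty, fun h1 h2 => absurd ⟨h1, h2⟩ hK⟩
  choose U hUopen hUprop using key
  set g : Set X → Set X := fun K => K \ U K with hgdef
  have hgsub : ∀ K, g K ⊆ K := fun K => diff_subset
  have hgclosed : ∀ K, IsClosed K → IsClosed (g K) := fun K hK => hK.sdiff (hUopen K)
  set F : Ordinal.{0} → Set X := iterF g with hFdef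
  have hFclosed : ∀ o, IsClosed (F o) := iterF_closed g hgclosed
  have hFsucc : ∀ o, F (Order.succ o) = g (F o) := iterF_succ g hgsub
  have hFanti : ∀ {a b : Ordinal.{0}}, a ≤ b → F b ⊆ F a := fun h => iterF_anti g h
  have hdiff : ∀ o, F o \ F (Order.succ o) = F o ∩ U (F o) := by
    intro o
    rw [hFsucc o]
    exact Set.diff_diff_right_self _ _
  set μ := Order.succ lam with hμdef
  -- termination: some stage is empty
  have hterm : ∃ o, o < μ.ord ∧ F o = ∅ := by
    by_contra hcon
    push_neg at hcon
    have step : ∀ o : Set.Iio μ.ord, ∃ b, b ∈ B ∧ (b ∩ F o.1).Nonempty ∧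
        b ∩ F (Order.succ o.1) = ∅ := by
      rintro ⟨o, ho⟩
      have hne : (F o).Nonempty := hcon o ho
      obtain ⟨hWne, -⟩ := hUprop (F o) (hFclosed o) hne
      obtain ⟨x, hx⟩ := hWne
      have hxnot : x ∉ F (Order.succ o) := by
        rw [hFsucc]; exact fun h => h.2 hx.2
      obtain ⟨b, hbB, hxb, hbsub⟩ := hBbasis.exists_subset_of_mem_open
        (show x ∈ (F (Order.succ o))ᶜ from hxnot) (hFclosed _).isOpen_compl
      exact ⟨b, hbB, ⟨x, hxb, hx.1⟩,
        eq_empty_iff_forall_notMem.2 fun y hy => hbsub hy.1 hy.2⟩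
    choose b hbB hbne hbdisj using step
    have haux : ∀ o₁ o₂ : Set.Iio μ.ord, o₁.1 < o₂.1 → b o₁ ≠ b o₂ := by
      intro o₁ o₂ h he
      obtain ⟨y, hyb, hyF⟩ := hbne o₂
      have hy1 : y ∈ F (Order.succ o₁.1) := hFanti (Order.succ_le_of_lt h) hyF
      have : y ∈ b o₁ ∩ F (Order.succ o₁.1) := ⟨he ▸ hyb, hy1⟩
      rw [hbdisj o₁] at this
      exact this
    have hinj : Function.Injective fun o : Set.Iio μ.ord => (⟨b o, hbB o⟩ : ↥B) := by
      intro o₁ o₂ he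
      have he' : b o₁ = b o₂ := congrArg Subtype.val he
      rcases lt_trichotomy o₁.1 o₂.1 with h | h | h
      · exact absurd he' (haux _ _ h)
      · exact Subtype.ext h
      · exact absurd he'.symm (haux _ _ h)
    have hle : Cardinal.lift.{0} #(Set.Iio μ.ord) ≤ Cardinal.lift.{1} #B :=
      Cardinal.lift_mk_le'.2 ⟨⟨_, hinj⟩⟩
    rw [Ordinal.mk_Iio_ordinal, Cardinal.card_ord, hBlam] at hle
    have : μ ≤ lam := by
      have := (Cardinal.lift_le.{1}).1 (by simpa using hle)
      exact this
    exact absurd this (not_le.2 (Order.lt_succ lam))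
  obtain ⟨o₁, ho₁lt, ho₁⟩ := hterm
  set S : Set Ordinal.{0} := {o | F o = ∅} with hSdef
  have hSne : S.Nonempty := ⟨o₁, ho₁⟩
  set α₀ := sInf S with hα₀def
  have hα₀ : F α₀ = ∅ := csInf_mem hSne
  have hα₀lt : α₀ < μ.ord := lt_of_le_of_lt (csInf_le' ho₁) ho₁lt
  have hα₀card : α₀.card ≤ lam := Order.lt_succ_iff.1 (Cardinal.lt_ord.1 hα₀lt)
  have hFne : ∀ o < α₀, (F o).Nonempty := by
    intro o ho
    refine nonempty_iff_ne_empty.2 fun h => ?_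
    exact absurd (csInf_le' (show o ∈ S from h)) (not_le.2 ho)
  set W : Ordinal.{0} → Set X := fun o => F o \ F (Order.succ o) with hWdef
  refine ⟨W '' Set.Iio α₀, ?_, ?_, ?_, ?_⟩
  · -- pairwise disjoint
    have haux : ∀ a c : Ordinal.{0}, a < c → Disjoint (W a) (W c) := by
      intro a c h
      refine Set.disjoint_left.2 fun x hxa hxc => ?_
      exact hxa.2 (hFanti (Order.succ_le_of_lt h) hxc.1)
    rintro s ⟨a, -, rfl⟩ t ⟨c, -, rfl⟩ hne
    rcases lt_trichotomy a c with h | h | h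
    · exact haux a c h
    · exact absurd (congrArg W h) hne
    · exact (haux c a h).symm
  · -- covers
    apply Set.eq_univ_of_forall
    intro x
    rw [mem_sUnion]
    set A : Set Ordinal.{0} := {o | x ∉ F o} with hAdef
    have hAne : A.Nonempty := ⟨α₀, by rw [mem_setOf_eq, hα₀]; exact notMem_empty x⟩
    set γ := sInf A with hγdef
    have hγ : x ∉ F γ := csInf_mem hAne
    have hγle : γ ≤ α₀ := csInf_le' (show α₀ ∈ A from by
      rw [mem_setOf_eq, hα₀]; exact notMem_empty x)
    have hstep : ∃ β : Set.Iio γ, x ∉ g (F β.1) := by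
      by_contra h
      push_neg at h
      exact hγ (by rw [hFdef, iterF_def]; exact mem_iInter.2 h)
    obtain ⟨⟨β, hβγ⟩, hβ⟩ := hstep
    have hxFβ : x ∈ F β := by
      by_contra h
      exact absurd (csInf_le' (show β ∈ A from h)) (not_le.2 hβγ)
    refine ⟨W β, ⟨β, lt_of_lt_of_le hβγ hγle, rfl⟩, hxFβ, ?_⟩
    rw [hFsucc]; exact hβ
  · -- cardinality
    have h1 : Cardinal.lift.{1} #(W '' Set.Iio α₀) ≤ Cardinal.lift.{0} #(Set.Iio α₀) :=
      Cardinal.mk_image_le_lift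
    rw [Ordinal.mk_Iio_ordinal] at h1
    have h2 : Cardinal.lift.{1} #(W '' Set.Iio α₀) ≤ Cardinal.lift.{1} lam := by
      refine h1.trans ?_
      simpa using Cardinal.lift_le.{1}.2 hα₀card
    exact Cardinal.lift_le.1 h2
  · -- each piece is Gδ of small weight
    rintro Y ⟨o, ho, rfl⟩
    have hne := hFne o ho
    obtain ⟨hWne, hWw⟩ := hUprop (F o) (hFclosed o) hne
    have hW : W o = F o ∩ U (F o) := hdiff o
    constructor
    · rw [hW]; exact ((hFclosed o).isGδ).inter (hUopen (F o)).isGδ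
    · rw [hW]; exact hWw
end
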